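/- arXiv:2311.03802 — 7 statements merged into one kernel-verified Lean document; each statement's English description precedes it below -/
import Mathlib

section
/- Let a > 0, μ > 0, and consider F(t) = ∫₀^∞ η^{a-1} cos(2η t^{3/4} + η³ t^{1/4}) e^{-2μη⁴} dη. Then F(t) → 0 as t → ∞. -/
open MeasureTheory Filter Set

lemma intOn_rpow_exp (μ : ℝ) (hμ : 0 < μ) (p : ℝ) (hp : -1 < p) :
    IntegrableOn (fun η : ℝ => η ^ p * Real.exp (-2*μ*η^4)) (Set.Ioi 0) := by
  have h := integrableOn_rpow_mul_exp_neg_mul_rpow hp (by norm_num : (0:ℝ) < 4) (by linarith : (0:ℝ) < 2*μ)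
  refine h.congr_fun (fun x hx => ?_) measurableSet_Ioi
  dsimp only
  rw [show ((4:ℝ)) = ((4:ℕ):ℝ) by norm_num, Real.rpow_natCast]
  ring_nf

lemma g_tendsto (a μ : ℝ) (hμ : 0 < μ) :
    Tendsto (fun η : ℝ => η ^ (a-1) * Real.exp (-2*μ*η^4)) atTop (nhds 0) := by
  have h := rpow_mul_exp_neg_mul_rpow_isLittleO_exp_neg (a-1) (show (1:ℝ) < 4 by norm_num)
    (show (0:ℝ) < 2*μ by linarith)
  have h2 : Tendsto (fun x : ℝ => Real.exp (-(1/2) * x)) atTop (nhds 0) := by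
    have := Real.tendsto_exp_neg_atTop_nhds_zero.comp
      (tendsto_id.const_mul_atTop (show (0:ℝ) < 1/2 by norm_num))
    refine this.congr fun x => ?_
    simp [Function.comp, neg_mul]
  have h3 := h.isBigO.trans_tendsto h2
  refine h3.congr' ?_
  filter_upwards [Ioi_mem_atTop (0:ℝ)] with x hx
  rw [show ((4:ℝ)) = ((4:ℕ):ℝ) by norm_num, Real.rpow_natCast]
  ring_nf

set_option maxHeartbeats 1000000 in
lemma tail_bound (a μ δ : ℝ) (ha : 0 < a) (hμ : 0 < μ) (hδ : 0 < δ) :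
    ∃ C : ℝ, 0 ≤ C ∧ ∀ r : ℝ, 1 ≤ r →
      |∫ η in Set.Ioi δ, η ^ (a-1) * Real.cos (2*η*r^3 + η^3*r) * Real.exp (-2*μ*η^4)| ≤ C / r^3 := by
  set g : ℝ → ℝ := fun η => η ^ (a-1) * Real.exp (-2*μ*η^4) with hg_def
  set g' : ℝ → ℝ := fun η => ((a-1) * η^(a-2) - 8*μ*η^(a+2)) * Real.exp (-2*μ*η^4) with hg'_def
  set B : ℝ → ℝ := fun η => ((|a-1|/δ) * η^(a-1) + 8*μ*η^(a+2) + 3*η^a) * Real.exp (-2*μ*η^4) with hB_def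
  have hIoi : Set.Ioi δ ⊆ Set.Ioi (0:ℝ) := Ioi_subset_Ioi hδ.le
  have hBint : IntegrableOn B (Set.Ioi δ) := by
    have h1 := ((intOn_rpow_exp μ hμ (a-1) (by linarith)).mono_set hIoi).const_mul (|a-1|/δ)
    have h2 := ((intOn_rpow_exp μ hμ (a+2) (by linarith)).mono_set hIoi).const_mul (8*μ)
    have h3 := ((intOn_rpow_exp μ hμ a (by linarith)).mono_set hIoi).const_mul 3
    have h4 : IntegrableOn (fun x : ℝ => |a-1|/δ * (x ^ (a-1) * Real.exp (-2*μ*x^4))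
        + 8*μ*(x^(a+2)*Real.exp (-2*μ*x^4)) + 3*(x^a*Real.exp (-2*μ*x^4))) (Set.Ioi δ) :=
      (h1.add h2).add h3
    refine h4.congr_fun (fun x hx => ?_) measurableSet_Ioi
    simp only [hB_def]; ring
  have hgpos : ∀ η : ℝ, 0 < η → 0 ≤ g η := by
    intro η hη
    exact mul_nonneg (Real.rpow_nonneg hη.le _) (Real.exp_pos _).le
  have hBnonneg : ∀ η ∈ Set.Ioi δ, 0 ≤ B η := by
    intro η hη
    have hη0 : (0:ℝ) < η := hδ.trans hη
    have h1 : (0:ℝ) ≤ |a-1|/δ := div_nonneg (abs_nonneg _) hδ.le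
    have := Real.rpow_nonneg hη0.le
    refine mul_nonneg (by positivity) (Real.exp_pos _).le
  have hIB : 0 ≤ ∫ η in Set.Ioi δ, B η := setIntegral_nonneg measurableSet_Ioi hBnonneg
  refine ⟨(g δ + ∫ η in Set.Ioi δ, B η)/2, by have := hgpos δ hδ; linarith, ?_⟩
  intro r hr
  have hr0 : (0:ℝ) < r := lt_of_lt_of_le one_pos hr
  have hr3 : (0:ℝ) < r^3 := by positivity
  set φ : ℝ → ℝ := fun η => 2*η*r^3 + η^3*r with hφ_def
  set φd : ℝ → ℝ := fun η => 2*r^3 + 3*η^2*r with hφd_def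
  have hφd_pos : ∀ η : ℝ, 0 < φd η := by intro η; simp only [hφd_def]; positivity
  have hφd_ge : ∀ η : ℝ, 2*r^3 ≤ φd η := by
    intro η; simp only [hφd_def]; nlinarith [sq_nonneg η]
  set ψ : ℝ → ℝ := fun η => g η / φd η * Real.sin (φ η) with hψ_def
  set hF : ℝ → ℝ := fun η => (g' η / φd η - g η * (6*η*r) / (φd η)^2) * Real.sin (φ η) with hF_def
  -- pointwise bound |ψ| ≤ g/(2r³)
  have habs : ∀ η : ℝ, 0 < η → |ψ η| ≤ g η / (2*r^3) := by
    intro η hη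
    have h1 : |ψ η| ≤ |g η / φd η| := by
      rw [hψ_def, abs_mul]
      exact mul_le_of_le_one_right (abs_nonneg _) (Real.abs_sin_le_one _)
    refine h1.trans ?_
    rw [abs_div, abs_of_nonneg (hgpos η hη), abs_of_pos (hφd_pos η)]
    gcongr
    all_goals first | exact hgpos η hη | exact hφd_ge η | positivity
  -- pointwise bound ‖hF‖ ≤ B/(2r³) on Ioi δ
  have hFbound : ∀ η ∈ Set.Ioi δ, ‖hF η‖ ≤ B η / (2*r^3) := by
    intro η hη
    have hη0 : (0:ℝ) < η := hδ.trans hη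
    have hexp : (0:ℝ) < Real.exp (-2*μ*η^4) := Real.exp_pos _
    have h1 : ‖hF η‖ ≤ |g' η / φd η| + |g η * (6*η*r) / (φd η)^2| := by
      rw [hF_def]
      calc ‖(g' η / φd η - g η * (6*η*r) / (φd η)^2) * Real.sin (φ η)‖
          ≤ |g' η / φd η - g η * (6*η*r) / (φd η)^2| := by
            rw [Real.norm_eq_abs, abs_mul]
            exact mul_le_of_le_one_right (abs_nonneg _) (Real.abs_sin_le_one _)
        _ ≤ _ := abs_sub _ _
    refine h1.trans ?_
    -- first term
    have hg'abs : |g' η| ≤ ((|a-1|/δ) * η^(a-1) + 8*μ*η^(a+2)) * Real.exp (-2*μ*η^4) := by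
      rw [hg'_def]
      have e1 : η^(a-2) = η^(a-1) / η := by
        rw [← Real.rpow_sub_one hη0.ne']; ring_nf
      have e2 : η^(a-1)/η ≤ η^(a-1)/δ := by
        gcongr
        all_goals first | exact Real.rpow_nonneg hη0.le _ | exact le_of_lt hη | positivity
      have h2 : |(a-1) * η^(a-2) - 8*μ*η^(a+2)| ≤ (|a-1|/δ) * η^(a-1) + 8*μ*η^(a+2) := by
        refine (abs_sub _ _).trans ?_
        have hb1 : |(a-1) * η^(a-2)| = |a-1| * η^(a-2) := by
          rw [abs_mul, abs_of_nonneg (Real.rpow_nonneg hη0.le _)]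
        have hb2 : |8*μ*η^(a+2)| = 8*μ*η^(a+2) := by
          rw [abs_of_nonneg (by positivity)]
        rw [hb1, hb2]
        have : |a-1| * η^(a-2) ≤ (|a-1|/δ) * η^(a-1) := by
          rw [e1]
          calc |a-1| * (η^(a-1)/η) ≤ |a-1| * (η^(a-1)/δ) := by
                gcongr
            _ = (|a-1|/δ) * η^(a-1) := by ring
        linarith
      rw [abs_mul, abs_of_pos hexp]
      exact mul_le_mul_of_nonneg_right h2 hexp.le
    have t1 : |g' η / φd η| ≤ ((|a-1|/δ) * η^(a-1) + 8*μ*η^(a+2)) * Real.exp (-2*μ*η^4) / (2*r^3) := by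
      rw [abs_div, abs_of_pos (hφd_pos η)]
      gcongr
      all_goals first | exact hφd_ge η | exact hg'abs | positivity
    -- second term
    have t2 : |g η * (6*η*r) / (φd η)^2| ≤ 3*η^a * Real.exp (-2*μ*η^4) / (2*r^3) := by
      have hgη : g η * (6*η*r) = 6*r*(η^a * Real.exp (-2*μ*η^4)) := by
        rw [hg_def]
        have : η^(a-1) * η = η^a := by
          rw [← Real.rpow_add_one hη0.ne' (a-1)]; ring_nf
        calc η ^ (a-1) * Real.exp (-2*μ*η^4) * (6*η*r)
            = 6*r*((η^(a-1) * η) * Real.exp (-2*μ*η^4)) := by ring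
          _ = 6*r*(η^a * Real.exp (-2*μ*η^4)) := by rw [this]
      have hφdsq : (2*r^3)*(2*r^3) ≤ (φd η)^2 := by
        have := hφd_ge η
        nlinarith [hφd_pos η]
      rw [abs_div, hgη]
      have hnum : |6*r*(η^a * Real.exp (-2*μ*η^4))| = 6*r*(η^a * Real.exp (-2*μ*η^4)) := by
        rw [abs_of_nonneg (by positivity)]
      rw [hnum, abs_of_nonneg (by positivity : (0:ℝ) ≤ (φd η)^2)]
      calc 6*r*(η^a * Real.exp (-2*μ*η^4)) / (φd η)^2
          ≤ 6*r*(η^a * Real.exp (-2*μ*η^4)) / ((2*r^3)*(2*r^3)) := by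
            gcongr
            all_goals positivity
        _ ≤ 3*η^a * Real.exp (-2*μ*η^4) / (2*r^3) := by
            rw [div_le_div_iff₀ (by positivity) (by positivity)]
            have hr2 : 1 ≤ r^2 := by nlinarith
            have h4 : r ≤ r^3 := by nlinarith [mul_nonneg hr0.le (sub_nonneg.2 hr2)]
            have hX : (0:ℝ) ≤ η^a * Real.exp (-2*μ*η^4) :=
              mul_nonneg (Real.rpow_nonneg hη0.le a) hexp.le
            nlinarith [mul_nonneg (mul_nonneg (by positivity : (0:ℝ) ≤ 12*r^3)
              hX) (sub_nonneg.2 h4)]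
    calc |g' η / φd η| + |g η * (6*η*r) / (φd η)^2|
        ≤ ((|a-1|/δ) * η^(a-1) + 8*μ*η^(a+2)) * Real.exp (-2*μ*η^4) / (2*r^3)
          + 3*η^a * Real.exp (-2*μ*η^4) / (2*r^3) := add_le_add t1 t2
      _ = B η / (2*r^3) := by rw [hB_def]; ring
  -- derivative of ψ
  have hderiv : ∀ η ∈ Set.Ici δ, HasDerivAt ψ (hF η + g η * Real.cos (φ η)) η := by
    intro η hη
    have hη0 : (0:ℝ) < η := lt_of_lt_of_le hδ hη
    have h1 : HasDerivAt (fun x : ℝ => x ^ (a-1)) ((a-1) * η^(a-1-1)) η :=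
      Real.hasDerivAt_rpow_const (Or.inl hη0.ne')
    have h2 : HasDerivAt (fun x : ℝ => Real.exp (-2*μ*x^4))
        (Real.exp (-2*μ*η^4) * (-2*μ*(4*η^3))) η := by
      have hinner : HasDerivAt (fun x : ℝ => -2*μ*x^4) (-2*μ*(4*η^3)) η := by
        have := (hasDerivAt_pow 4 η).const_mul (-2*μ)
        convert this using 1
        rfl
        rfl
        all_goals push_cast; ring
      exact (Real.hasDerivAt_exp _).comp η hinner
    have hg : HasDerivAt g (g' η) η := by
      have := h1.mul h2
      simp only [hg_def, hg'_def]
      convert this using 1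
      rfl
      rfl
      rfl
      have e2 : η ^ (a-1) * η^(3:ℕ) = η^(a+2) := by
        rw [← Real.rpow_natCast η 3, ← Real.rpow_add hη0]
        congr 1
        push_cast
        ring
      have e1 : a - 2 = a - 1 - 1 := by ring
      rw [e1, ← e2]
      ring
    have hφ : HasDerivAt φ (φd η) η := by
      rw [hφ_def, hφd_def]
      have ha1 : HasDerivAt (fun x : ℝ => 2*x*r^3) (2*r^3) η := by
        have := ((hasDerivAt_id η).const_mul 2).mul_const (r^3)
        convert this using 1
        rfl
        rfl
        rfl
        all_goals first | (funext x; simp [id]; ring) | (push_cast; ring)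
      have ha2 : HasDerivAt (fun x : ℝ => x^3*r) (3*η^2*r) η := by
        have := (hasDerivAt_pow 3 η).mul_const r
        convert this using 1
        rfl
        rfl
        all_goals push_cast; ring
      exact ha1.add ha2
    have hφd' : HasDerivAt φd (6*η*r) η := by
      rw [hφd_def]
      have ha2 : HasDerivAt (fun x : ℝ => 3*x^2*r) (6*η*r) η := by
        have := ((hasDerivAt_pow 2 η).const_mul 3).mul_const r
        convert this using 1
        rfl
        rfl
        all_goals first | (funext x; simp [id]; ring) | (push_cast; ring)
      exact (ha2.const_add (2*r^3))
    have hsin : HasDerivAt (fun x : ℝ => Real.sin (φ x)) (Real.cos (φ η) * φd η) η :=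
      (Real.hasDerivAt_sin (φ η)).comp η hφ
    have hne : φd η ≠ 0 := (hφd_pos η).ne'
    have := (hg.div hφd' hne).mul hsin
    rw [hψ_def, hF_def]
    convert this using 1
    rfl
    rfl
    rfl
    have hne2 : (φd η)^2 ≠ 0 := pow_ne_zero _ hne
    rw [Pi.div_apply]
    field_simp
  -- continuity facts for measurability
  have hcont_exp : Continuous (fun η : ℝ => Real.exp (-2*μ*η^4)) :=
    Real.continuous_exp.comp (by fun_prop)
  have hcont_rpow : ∀ p : ℝ, ContinuousOn (fun η : ℝ => η ^ p) (Set.Ioi δ) := by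
    intro p x hx
    exact (Real.continuousAt_rpow_const x p (Or.inl (hδ.trans hx).ne')).continuousWithinAt
  have hcont_g : ContinuousOn g (Set.Ioi δ) := (hcont_rpow (a-1)).mul hcont_exp.continuousOn
  have hcont_g' : ContinuousOn g' (Set.Ioi δ) := by
    refine ContinuousOn.mul ?_ hcont_exp.continuousOn
    exact ((continuousOn_const.mul (hcont_rpow (a-2))).sub (continuousOn_const.mul (hcont_rpow (a+2))))
  have hcont_φ : Continuous φ := by rw [hφ_def]; fun_prop
  have hcont_φd : Continuous φd := by rw [hφd_def]; fun_prop
  have hcont_hF : ContinuousOn hF (Set.Ioi δ) := by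
    rw [hF_def]
    refine ContinuousOn.mul ?_ (Real.continuous_sin.comp hcont_φ).continuousOn
    refine ContinuousOn.sub ?_ ?_
    · exact hcont_g'.div hcont_φd.continuousOn (fun x _ => (hφd_pos x).ne')
    · exact (hcont_g.mul (Continuous.continuousOn (by fun_prop))).div (hcont_φd.pow 2).continuousOn
        (fun x _ => pow_ne_zero _ (hφd_pos x).ne')
  -- integrability
  have hgint : IntegrableOn g (Set.Ioi δ) :=
    (intOn_rpow_exp μ hμ (a-1) (by linarith)).mono_set hIoi
  have hFint : IntegrableOn hF (Set.Ioi δ) := by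
    refine Integrable.mono' (hBint.div_const (2*r^3))
      (hcont_hF.aestronglyMeasurable measurableSet_Ioi) ?_
    rw [ae_restrict_iff' measurableSet_Ioi]
    exact Eventually.of_forall hFbound
  have hgcint : IntegrableOn (fun η => g η * Real.cos (φ η)) (Set.Ioi δ) := by
    refine Integrable.mono' hgint
      ((hcont_g.mul (Real.continuous_cos.comp hcont_φ).continuousOn).aestronglyMeasurable
        measurableSet_Ioi) ?_
    rw [ae_restrict_iff' measurableSet_Ioi]
    refine Eventually.of_forall (fun η hη => ?_)
    have hη0 : (0:ℝ) < η := hδ.trans hη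
    rw [Real.norm_eq_abs, abs_mul, abs_of_nonneg (hgpos η hη0)]
    exact mul_le_of_le_one_right (hgpos η hη0) (Real.abs_cos_le_one _)
  have hF'int : IntegrableOn (fun η => hF η + g η * Real.cos (φ η)) (Set.Ioi δ) :=
    hFint.add hgcint
  -- tendsto of ψ at infinity
  have hψtend : Tendsto ψ atTop (nhds 0) := by
    have hg0 : Tendsto g atTop (nhds 0) := g_tendsto a μ hμ
    refine squeeze_zero_norm' ?_ (by simpa using hg0.div_const (2*r^3))
    filter_upwards [Ioi_mem_atTop (0:ℝ)] with η hη
    exact habs η hη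
  -- integration by parts / FTC
  have key := integral_Ioi_of_hasDerivAt_of_tendsto' hderiv hF'int hψtend
  rw [MeasureTheory.integral_add hFint hgcint] at key
  have hsplit : ∫ η in Set.Ioi δ, g η * Real.cos (φ η)
      = (0 - ψ δ) - ∫ η in Set.Ioi δ, hF η := by linarith [key]
  have hgoal_eq : (fun η : ℝ => η ^ (a-1) * Real.cos (2*η*r^3 + η^3*r) * Real.exp (-2*μ*η^4))
      = fun η => g η * Real.cos (φ η) := by
    funext η
    rw [hg_def, hφ_def]
    ring
  rw [hgoal_eq, hsplit]
  have hb1 : |ψ δ| ≤ g δ / (2*r^3) := habs δ hδ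
  have hb2 : |∫ η in Set.Ioi δ, hF η| ≤ (∫ η in Set.Ioi δ, B η) / (2*r^3) := by
    have := norm_integral_le_of_norm_le (μ := volume.restrict (Set.Ioi δ))
      (hBint.div_const (2*r^3))
      ((ae_restrict_iff' measurableSet_Ioi).2 (Eventually.of_forall hFbound))
    rw [Real.norm_eq_abs] at this
    refine this.trans ?_
    rw [integral_div]
  calc |0 - ψ δ - ∫ η in Set.Ioi δ, hF η|
      ≤ |ψ δ| + |∫ η in Set.Ioi δ, hF η| := by
        rw [zero_sub]
        exact (abs_sub _ _).trans (by rw [abs_neg])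
    _ ≤ g δ / (2*r^3) + (∫ η in Set.Ioi δ, B η) / (2*r^3) := add_le_add hb1 hb2
    _ = (g δ + ∫ η in Set.Ioi δ, B η)/2 / r^3 := by ring

lemma head_bound (a μ δ : ℝ) (ha : 0 < a) (hμ : 0 < μ) (hδ : 0 < δ) (θ : ℝ → ℝ) :
    |∫ η in Set.Ioc 0 δ, η ^ (a-1) * Real.cos (θ η) * Real.exp (-2*μ*η^4)| ≤ δ^a / a := by
  have hbint : IntegrableOn (fun η : ℝ => η ^ (a-1)) (Set.Ioc 0 δ) := by
    have := intervalIntegral.intervalIntegrable_rpow' (a := 0) (b := δ)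
      (show (-1:ℝ) < a-1 by linarith)
    rwa [intervalIntegrable_iff_integrableOn_Ioc_of_le hδ.le] at this
  have hb : ∀ᵐ η ∂(volume.restrict (Set.Ioc 0 δ)),
      ‖η ^ (a-1) * Real.cos (θ η) * Real.exp (-2*μ*η^4)‖ ≤ η ^ (a-1) := by
    rw [ae_restrict_iff' measurableSet_Ioc]
    refine Filter.Eventually.of_forall (fun η hη => ?_)
    have hη0 : (0:ℝ) < η := hη.1
    have h1 : (0:ℝ) ≤ η ^ (a-1) := Real.rpow_nonneg hη0.le _
    rw [Real.norm_eq_abs, abs_mul, abs_mul, abs_of_nonneg h1]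
    have hexp : |Real.exp (-2*μ*η^4)| ≤ 1 := by
      rw [abs_of_pos (Real.exp_pos _)]
      exact Real.exp_le_one_iff.2 (by nlinarith [pow_pos hη0 4])
    calc η ^ (a-1) * |Real.cos (θ η)| * |Real.exp (-2*μ*η^4)|
        ≤ η ^ (a-1) * 1 * 1 := by
          gcongr
          exact Real.abs_cos_le_one _
      _ = η ^ (a-1) := by ring
  have h2 := norm_integral_le_of_norm_le hbint hb
  rw [Real.norm_eq_abs] at h2
  refine h2.trans ?_
  have h3 : ∫ η in Set.Ioc 0 δ, η ^ (a-1) = δ^a / a := by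
    rw [← intervalIntegral.integral_of_le hδ.le,
      integral_rpow (Or.inl (by linarith : (-1:ℝ) < a-1))]
    rw [Real.zero_rpow (by linarith : a - 1 + 1 ≠ 0)]
    ring_nf
  rw [h3]

theorem riemann_lebesgue_oscillatory (a μ : ℝ) (ha : 0 < a) (hμ : 0 < μ) :
    Tendsto (fun t : ℝ =>
      ∫ η in Set.Ioi (0 : ℝ),
        η ^ (a - 1) * Real.cos (2 * η * t ^ ((3 : ℝ) / 4) + η ^ 3 * t ^ ((1 : ℝ) / 4)) *
          Real.exp (-2 * μ * η ^ 4)) atTop (nhds 0) := by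
  rw [NormedAddCommGroup.tendsto_nhds_zero]
  intro ε hε
  set δ : ℝ := (a*(ε/2))^((1:ℝ)/a) with hδ_def
  have hδ : 0 < δ := Real.rpow_pos_of_pos (by positivity) _
  have hδa : δ^a / a = ε/2 := by
    have h1 : δ^a = a*(ε/2) := by
      rw [hδ_def, ← Real.rpow_mul (by positivity), one_div, inv_mul_cancel₀ ha.ne',
        Real.rpow_one]
    rw [h1]
    field_simp
  obtain ⟨C, hC0, hC⟩ := tail_bound a μ δ ha hμ hδ
  have htail : Tendsto (fun t : ℝ => C / t^((3:ℝ)/4)) atTop (nhds 0) := by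
    have h := (tendsto_rpow_neg_atTop (show (0:ℝ) < 3/4 by norm_num)).const_mul C
    rw [mul_zero] at h
    refine h.congr' ?_
    filter_upwards [Ioi_mem_atTop (0:ℝ)] with t ht
    rw [Real.rpow_neg (le_of_lt ht)]
    ring
  have hsmall : ∀ᶠ t : ℝ in atTop, C / t^((3:ℝ)/4) < ε/2 :=
    htail.eventually (gt_mem_nhds (by linarith : (0:ℝ) < ε/2))
  filter_upwards [Ioi_mem_atTop (1:ℝ), hsmall] with t ht1 htsmall
  have ht0 : (0:ℝ) < t := lt_trans one_pos ht1
  set r : ℝ := t^((1:ℝ)/4) with hr_def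
  have hr1 : 1 ≤ r := Real.one_le_rpow ht1.le (by norm_num)
  have hr3 : t ^ ((3:ℝ)/4) = r^(3:ℕ) := by
    rw [hr_def, ← Real.rpow_natCast (t^((1:ℝ)/4)) 3, ← Real.rpow_mul ht0.le]
    norm_num
  -- integrability of the full integrand
  have hcont_exp : Continuous (fun η : ℝ => Real.exp (-2*μ*η^4)) :=
    Real.continuous_exp.comp (by fun_prop)
  have hint : IntegrableOn (fun η : ℝ =>
      η ^ (a - 1) * Real.cos (2 * η * t ^ ((3:ℝ)/4) + η ^ 3 * t ^ ((1:ℝ)/4)) *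
        Real.exp (-2*μ*η^4)) (Set.Ioi 0) := by
    refine Integrable.mono' (intOn_rpow_exp μ hμ (a-1) (by linarith)) ?_ ?_
    · refine ContinuousOn.aestronglyMeasurable ?_ measurableSet_Ioi
      refine ContinuousOn.mul (ContinuousOn.mul ?_ ?_) hcont_exp.continuousOn
      · intro x hx
        exact (Real.continuousAt_rpow_const x _ (Or.inl (ne_of_gt hx))).continuousWithinAt
      · exact (Real.continuous_cos.comp (by fun_prop)).continuousOn
    · rw [ae_restrict_iff' measurableSet_Ioi]
      refine Filter.Eventually.of_forall (fun η hη => ?_)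
      have hη0 : (0:ℝ) < η := hη
      have h1 : (0:ℝ) ≤ η ^ (a-1) := Real.rpow_nonneg hη0.le _
      rw [Real.norm_eq_abs, abs_mul, abs_mul, abs_of_nonneg h1,
        abs_of_pos (Real.exp_pos _)]
      calc η ^ (a-1) * |Real.cos _| * Real.exp (-2*μ*η^4)
          ≤ η ^ (a-1) * 1 * Real.exp (-2*μ*η^4) := by
            gcongr
            exact Real.abs_cos_le_one _
        _ = η ^ (a-1) * Real.exp (-2*μ*η^4) := by ring
  -- split the integral
  have hunion : Set.Ioc (0:ℝ) δ ∪ Set.Ioi δ = Set.Ioi 0 := Set.Ioc_union_Ioi_eq_Ioi hδ.le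
  have hsplit : (∫ η in Set.Ioi (0:ℝ),
        η ^ (a - 1) * Real.cos (2 * η * t ^ ((3:ℝ)/4) + η ^ 3 * t ^ ((1:ℝ)/4)) *
          Real.exp (-2*μ*η^4))
      = (∫ η in Set.Ioc (0:ℝ) δ,
          η ^ (a - 1) * Real.cos (2 * η * t ^ ((3:ℝ)/4) + η ^ 3 * t ^ ((1:ℝ)/4)) *
            Real.exp (-2*μ*η^4))
        + ∫ η in Set.Ioi δ,
            η ^ (a - 1) * Real.cos (2 * η * t ^ ((3:ℝ)/4) + η ^ 3 * t ^ ((1:ℝ)/4)) *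
              Real.exp (-2*μ*η^4) := by
    rw [← hunion]
    exact setIntegral_union (Set.Ioc_disjoint_Ioi le_rfl) measurableSet_Ioi
      (hint.mono_set (by rw [← hunion]; exact Set.subset_union_left))
      (hint.mono_set (by rw [← hunion]; exact Set.subset_union_right))
  rw [Real.norm_eq_abs, hsplit]
  have hhead := head_bound a μ δ ha hμ hδ
    (fun η => 2 * η * t ^ ((3:ℝ)/4) + η ^ 3 * t ^ ((1:ℝ)/4))
  have htail2 : |∫ η in Set.Ioi δ,
      η ^ (a - 1) * Real.cos (2 * η * t ^ ((3:ℝ)/4) + η ^ 3 * t ^ ((1:ℝ)/4)) *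
        Real.exp (-2*μ*η^4)| ≤ C / r^3 := by
    have := hC r hr1
    convert this using 4
    rw [hr3, hr_def]
  have hCr : C / r^3 = C / t^((3:ℝ)/4) := by rw [hr3]
  calc |(∫ η in Set.Ioc (0:ℝ) δ,
          η ^ (a - 1) * Real.cos (2 * η * t ^ ((3:ℝ)/4) + η ^ 3 * t ^ ((1:ℝ)/4)) *
            Real.exp (-2*μ*η^4))
        + ∫ η in Set.Ioi δ,
            η ^ (a - 1) * Real.cos (2 * η * t ^ ((3:ℝ)/4) + η ^ 3 * t ^ ((1:ℝ)/4)) *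
              Real.exp (-2*μ*η^4)|
      ≤ |∫ η in Set.Ioc (0:ℝ) δ,
          η ^ (a - 1) * Real.cos (2 * η * t ^ ((3:ℝ)/4) + η ^ 3 * t ^ ((1:ℝ)/4)) *
            Real.exp (-2*μ*η^4)|
        + |∫ η in Set.Ioi δ,
            η ^ (a - 1) * Real.cos (2 * η * t ^ ((3:ℝ)/4) + η ^ 3 * t ^ ((1:ℝ)/4)) *
              Real.exp (-2*μ*η^4)| := abs_add_le _ _
    _ ≤ δ^a / a + C / r^3 := add_le_add hhead htail2
    _ = ε/2 + C / t^((3:ℝ)/4) := by rw [hδa, hCr]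
    _ < ε := by linarith
end

section
/- Let n ≥ 1, s ≥ 0, μ > 0, and define Ĝ₀(t,ξ) = cos(|ξ|t + (1/2)|ξ|³t) e^{-μ|ξ|⁴t} for ξ ∈ ℝⁿ. Then there exist constants c₁, c₂ > 0 and T₀ ≥ 1 such that for all t ≥ T₀, c₁ t^{-(2s+n)/8} ≤ (∫_{ℝⁿ} |ξ|^{2s} |Ĝ₀(t,ξ)|² dξ)^{1/2} ≤ c₂ t^{-(2s+n)/8}. -/
open MeasureTheory Set Real

noncomputable def Gker (s μ t r : ℝ) : ℝ :=
  r ^ (2 * s) * (Real.cos (r * t + (1 / 2) * r ^ 3 * t) * Real.exp (-μ * r ^ 4 * t)) ^ 2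

lemma Gker_nonneg (s μ t r : ℝ) (hr : 0 ≤ r) : 0 ≤ Gker s μ t r := by
  unfold Gker; positivity

lemma phi_deriv (t r : ℝ) :
    HasDerivAt (fun x : ℝ => x * t + 1 / 2 * x ^ 3 * t) (t + 1/2*(3*r^2)*t) r := by
  have h1 : HasDerivAt (fun x : ℝ => x * t) t r := by
    simpa using (hasDerivAt_id r).mul_const t
  have h2 : HasDerivAt (fun x : ℝ => 1 / 2 * x ^ 3 * t) (1/2*(3*r^2)*t) r := by
    have h := ((hasDerivAt_pow 3 r).const_mul (1/2 : ℝ)).mul_const t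
    exact h.congr_deriv (by norm_num)
  exact h1.add h2


lemma neg_one_le_cos_mul_sin (x : ℝ) : -1 ≤ Real.cos x * Real.sin x := by
  nlinarith [Real.neg_one_le_cos x, Real.cos_le_one x, Real.neg_one_le_sin x, Real.sin_le_one x]

lemma cos_mul_sin_le_one (x : ℝ) : Real.cos x * Real.sin x ≤ 1 := by
  nlinarith [Real.neg_one_le_cos x, Real.cos_le_one x, Real.neg_one_le_sin x, Real.sin_le_one x]

lemma radial_measurable (n : ℕ) (s μ t : ℝ) :
    Measurable (fun r : ℝ => r ^ (n - 1) * Gker s μ t r) := by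
  unfold Gker
  fun_prop

lemma Gker_bound (n : ℕ) (hn : 1 ≤ n) (s μ t : ℝ) (hs : 0 ≤ s) {r : ℝ} (hr : 0 < r) :
    r ^ (n - 1) * Gker s μ t r ≤ r ^ (2 * s + n - 1) * Real.exp (-(2 * μ * t) * r ^ (4:ℝ)) := by
  have h1 : r ^ (n - 1) * r ^ (2 * s) = r ^ (2 * s + n - 1) := by
    rw [← Real.rpow_natCast r (n - 1), ← Real.rpow_add hr]
    congr 1
    rw [Nat.cast_sub hn]
    ring
  have h2 : (Real.cos (r * t + (1 / 2) * r ^ 3 * t) * Real.exp (-μ * r ^ 4 * t)) ^ 2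
      ≤ Real.exp (-(2 * μ * t) * r ^ (4:ℝ)) := by
    rw [mul_pow, ← Real.exp_nat_mul]
    have hc : Real.cos (r * t + (1 / 2) * r ^ 3 * t) ^ 2 ≤ 1 := by
      have := Real.neg_one_le_cos (r * t + (1 / 2) * r ^ 3 * t)
      have := Real.cos_le_one (r * t + (1 / 2) * r ^ 3 * t)
      nlinarith
    have he : Real.exp ((2:ℕ) * (-μ * r ^ 4 * t)) = Real.exp (-(2 * μ * t) * r ^ (4:ℝ)) := by
      congr 1
      rw [show ((4:ℝ)) = ((4:ℕ):ℝ) by norm_num, Real.rpow_natCast]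
      push_cast; ring
    calc Real.cos (r * t + (1 / 2) * r ^ 3 * t) ^ 2 * Real.exp ((2:ℕ) * (-μ * r ^ 4 * t))
        ≤ 1 * Real.exp ((2:ℕ) * (-μ * r ^ 4 * t)) := by
          exact mul_le_mul_of_nonneg_right hc (Real.exp_nonneg _)
      _ = Real.exp (-(2 * μ * t) * r ^ (4:ℝ)) := by rw [one_mul, he]
  calc r ^ (n - 1) * Gker s μ t r
      = r ^ (n - 1) * r ^ (2 * s) *
        (Real.cos (r * t + (1 / 2) * r ^ 3 * t) * Real.exp (-μ * r ^ 4 * t)) ^ 2 := by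
        unfold Gker; ring
    _ ≤ r ^ (n - 1) * r ^ (2 * s) * Real.exp (-(2 * μ * t) * r ^ (4:ℝ)) := by
        apply mul_le_mul_of_nonneg_left h2; positivity
    _ = r ^ (2 * s + n - 1) * Real.exp (-(2 * μ * t) * r ^ (4:ℝ)) := by rw [h1]

lemma radial_integrable (n : ℕ) (hn : 1 ≤ n) (s μ t : ℝ) (hs : 0 ≤ s) (hμ : 0 < μ)
    (ht : 0 < t) :
    IntegrableOn (fun r : ℝ => r ^ (n - 1) * Gker s μ t r) (Ioi (0:ℝ)) := by
  have hq : (-1:ℝ) < 2 * s + n - 1 := by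
    have : (1:ℝ) ≤ n := by exact_mod_cast hn
    linarith
  have hb : (0:ℝ) < 2 * μ * t := by positivity
  have hint := integrableOn_rpow_mul_exp_neg_mul_rpow hq (by norm_num : (0:ℝ) < 4) hb
  refine hint.mono' ((radial_measurable n s μ t).aestronglyMeasurable.restrict) ?_
  filter_upwards [ae_restrict_mem measurableSet_Ioi] with r hr
  rw [Real.norm_eq_abs, abs_of_nonneg (mul_nonneg (pow_nonneg hr.le _) (Gker_nonneg s μ t r hr.le))]
  exact Gker_bound n hn s μ t hs hr

lemma radial_lower (n : ℕ) (hn : 1 ≤ n) (s μ : ℝ) (hs : 0 ≤ s) (hμ : 0 < μ)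
    (t : ℝ) (ht : 16 ≤ t) :
    (Real.exp (-(32*μ)) / 28) * t ^ (-(2*s+(n:ℝ))/4) ≤
      ∫ r in Ioi (0:ℝ), r ^ (n - 1) * Gker s μ t r := by
  have ht0 : (0:ℝ) < t := by linarith
  have ht1 : (1:ℝ) ≤ t := by linarith
  obtain ⟨a, ha_def⟩ : ∃ a : ℝ, a = t ^ (-(1:ℝ)/4) := ⟨_, rfl⟩
  have ha : 0 < a := by rw [ha_def]; exact Real.rpow_pos_of_pos ht0 _
  have ha1 : a ≤ 1 := by rw [ha_def]; exact Real.rpow_le_one_of_one_le_of_nonpos ht1 (by norm_num)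
  obtain ⟨b, hb_def⟩ : ∃ b : ℝ, b = 2 * a := ⟨_, rfl⟩
  have hab : a < b := by linarith
  obtain ⟨q, hq_def⟩ : ∃ q : ℝ, q = 2 * s + (n:ℝ) - 1 := ⟨_, rfl⟩
  have hq0 : 0 ≤ q := by
    have : (1:ℝ) ≤ n := by exact_mod_cast hn
    rw [hq_def]; linarith
  obtain ⟨K, hK_def⟩ : ∃ K : ℝ, K = Real.exp (-(32*μ)) * t ^ (-q/4) / (7*t) := ⟨_, rfl⟩
  have hKpos : 0 < K := by
    rw [hK_def]
    have := Real.rpow_pos_of_pos ht0 (-q/4)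
    positivity
  obtain ⟨φ, hφ_def⟩ : ∃ φ : ℝ → ℝ, φ = fun x => x * t + 1 / 2 * x ^ 3 * t := ⟨_, rfl⟩
  obtain ⟨φ', hφ'_def⟩ : ∃ φ' : ℝ → ℝ, φ' = fun x => t + 1/2*(3*x^2)*t := ⟨_, rfl⟩
  -- a^4 = t⁻¹ fact
  have ha4 : a ^ (4:ℕ) = t ^ (-(1:ℝ)) := by
    rw [ha_def, ← Real.rpow_natCast (t ^ (-(1:ℝ)/4)) 4, ← Real.rpow_mul ht0.le]
    norm_num
  have hat : a * t = t ^ ((3:ℝ)/4) := by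
    rw [ha_def]
    nth_rewrite 2 [← Real.rpow_one t]
    rw [← Real.rpow_add ht0]
    norm_num
  have hat4 : (4:ℝ) ≤ t ^ ((3:ℝ)/4) := by
    have h16 : (16:ℝ) ^ ((3:ℝ)/4) ≤ t ^ ((3:ℝ)/4) :=
      Real.rpow_le_rpow (by norm_num) ht (by norm_num)
    have : (16:ℝ) ^ ((3:ℝ)/4) = 8 := by
      rw [show (16:ℝ) = 2 ^ (4:ℕ) by norm_num, ← Real.rpow_natCast 2 4,
        ← Real.rpow_mul (by norm_num)]
      norm_num
    linarith
  -- pointwise bound on Icc a b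
  have hpt : ∀ r ∈ Icc a b, K * (Real.cos (φ r) ^ 2 * φ' r) ≤ r ^ (n - 1) * Gker s μ t r := by
    intro r hr
    have hra : a ≤ r := hr.1
    have hrb : r ≤ b := hr.2
    have hr0 : 0 < r := lt_of_lt_of_le ha hra
    have hr2 : r ≤ 2 := by
      calc r ≤ b := hrb
        _ = 2 * a := hb_def
        _ ≤ 2 := by linarith
    have hcos2 : (0:ℝ) ≤ Real.cos (φ r) ^ 2 := sq_nonneg _
    have hφ'le : φ' r ≤ 7 * t := by
      simp only [hφ'_def]
      have hsq : r ^ 2 ≤ 4 := by nlinarith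
      nlinarith [mul_le_mul_of_nonneg_right hsq ht0.le]
    -- r^4 * t ≤ 16
    have hr4 : r ^ 4 * t ≤ 16 := by
      have hb4 : r ^ 4 ≤ 16 * a ^ 4 := by
        have h := pow_le_pow_left₀ hr0.le hrb 4
        have : b ^ 4 = 16 * a ^ 4 := by rw [hb_def]; ring
        linarith
      have : (16:ℝ) * a ^ 4 * t = 16 := by
        rw [ha4, Real.rpow_neg_one]
        field_simp
      nlinarith [Real.rpow_pos_of_pos ht0 (-(1:ℝ))]
    have hexp : Real.exp (-(32*μ)) ≤ Real.exp (-μ * r^4 * t) ^ 2 := by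
      rw [← Real.exp_nat_mul]
      apply Real.exp_le_exp.mpr
      push_cast
      nlinarith
    have hrq : t ^ (-q/4) ≤ r ^ (n-1) * r ^ (2*s) := by
      have h1 : r ^ (n - 1) * r ^ (2 * s) = r ^ q := by
        rw [← Real.rpow_natCast r (n - 1), ← Real.rpow_add hr0]
        congr 1
        rw [Nat.cast_sub hn]
        simp only [hq_def]; ring
      have h2 : a ^ q ≤ r ^ q := Real.rpow_le_rpow ha.le hra hq0
      have h3 : a ^ q = t ^ (-q/4) := by
        rw [ha_def, ← Real.rpow_mul ht0.le]
        congr 1; ring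
      rw [h1, ← h3]; exact h2
    -- assemble
    have hGker : r ^ (n-1) * Gker s μ t r =
        (r ^ (n-1) * r ^ (2*s)) * Real.exp (-μ * r^4 * t) ^ 2 * Real.cos (φ r) ^ 2 := by
      simp only [Gker, hφ_def, mul_pow]
      ring
    have step1 : K * (Real.cos (φ r) ^ 2 * φ' r) ≤ K * (Real.cos (φ r) ^ 2 * (7*t)) := by
      apply mul_le_mul_of_nonneg_left (mul_le_mul_of_nonneg_left hφ'le hcos2) hKpos.le
    have step2 : K * (Real.cos (φ r) ^ 2 * (7*t)) =
        (Real.exp (-(32*μ)) * t ^ (-q/4)) * Real.cos (φ r) ^ 2 := by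
      simp only [hK_def]
      field_simp
    have step3 : (Real.exp (-(32*μ)) * t ^ (-q/4)) * Real.cos (φ r) ^ 2 ≤
        ((r ^ (n-1) * r ^ (2*s)) * Real.exp (-μ * r^4 * t) ^ 2) * Real.cos (φ r) ^ 2 := by
      apply mul_le_mul_of_nonneg_right _ hcos2
      calc Real.exp (-(32*μ)) * t ^ (-q/4)
          ≤ Real.exp (-μ * r^4 * t) ^ 2 * (r ^ (n-1) * r ^ (2*s)) := by
            apply mul_le_mul hexp hrq (Real.rpow_pos_of_pos ht0 _).le (by positivity)
        _ = (r ^ (n-1) * r ^ (2*s)) * Real.exp (-μ * r^4 * t) ^ 2 := by ring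
    rw [hGker]
    calc K * (Real.cos (φ r) ^ 2 * φ' r) ≤ K * (Real.cos (φ r) ^ 2 * (7*t)) := step1
      _ = (Real.exp (-(32*μ)) * t ^ (-q/4)) * Real.cos (φ r) ^ 2 := step2
      _ ≤ _ := step3
  have hφba : t ^ ((3:ℝ)/4) ≤ φ b - φ a := by
    have key : φ b - φ a = a * t + (7/2) * a^3 * t := by
      simp only [hφ_def, hb_def]; ring
    have h3 : 0 ≤ a ^ 3 * t := by positivity
    rw [key, ← hat]
    linarith
  have htrig : (φ b - φ a - 2) / 2 ≤
      (Real.cos (φ b) * Real.sin (φ b) - Real.cos (φ a) * Real.sin (φ a) + φ b - φ a) / 2 := by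
    linarith [neg_one_le_cos_mul_sin (φ b), cos_mul_sin_le_one (φ a)]
  have hE : K * (t ^ ((3:ℝ)/4) / 4) ≤
      K * ((Real.cos (φ b) * Real.sin (φ b) - Real.cos (φ a) * Real.sin (φ a) + φ b - φ a) / 2) := by
    apply mul_le_mul_of_nonneg_left _ hKpos.le
    have : t ^ ((3:ℝ)/4) / 4 ≤ (φ b - φ a - 2) / 2 := by linarith
    linarith [htrig]
  have hpow : t ^ (-q/4) * t ^ ((3:ℝ)/4) / t = t ^ (-(2*s+(n:ℝ))/4) := by
    rw [div_eq_mul_inv, ← Real.rpow_neg_one t, ← Real.rpow_add ht0, ← Real.rpow_add ht0]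
    congr 1
    simp only [hq_def]; ring
  have hval : (Real.exp (-(32*μ)) / 28) * t ^ (-(2*s+(n:ℝ))/4) = K * (t ^ ((3:ℝ)/4) / 4) := by
    rw [hK_def, ← hpow]
    field_simp
    ring
  -- integrability facts
  have hmain_int : IntegrableOn (fun r : ℝ => r ^ (n - 1) * Gker s μ t r) (Ioi (0:ℝ)) :=
    radial_integrable n hn s μ t hs hμ ht0
  have hsub : Ioc a b ⊆ Ioi (0:ℝ) := fun x hx => ha.trans hx.1
  have hA : ∫ r in Ioc a b, r ^ (n - 1) * Gker s μ t r ≤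
      ∫ r in Ioi (0:ℝ), r ^ (n - 1) * Gker s μ t r := by
    refine setIntegral_mono_set hmain_int ?_ hsub.eventuallyLE
    filter_upwards [ae_restrict_mem measurableSet_Ioi] with r hr
    exact mul_nonneg (pow_nonneg hr.le _) (Gker_nonneg s μ t r hr.le)
  have hB : ∫ r in a..b, r ^ (n - 1) * Gker s μ t r =
      ∫ r in Ioc a b, r ^ (n - 1) * Gker s μ t r :=
    intervalIntegral.integral_of_le hab.le
  have hcontφ' : Continuous φ' := by rw [hφ'_def]; fun_prop
  have hcontφ : Continuous φ := by rw [hφ_def]; fun_prop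
  have hlow_int : IntervalIntegrable (fun r => K * (Real.cos (φ r) ^ 2 * φ' r)) volume a b :=
    (continuous_const.mul (((Real.continuous_cos.comp hcontφ).pow 2).mul hcontφ')).intervalIntegrable a b
  have hmain_ii : IntervalIntegrable (fun r : ℝ => r ^ (n - 1) * Gker s μ t r) volume a b := by
    rw [intervalIntegrable_iff_integrableOn_Ioc_of_le hab.le]
    exact hmain_int.mono_set hsub
  have hC : ∫ r in a..b, K * (Real.cos (φ r) ^ 2 * φ' r) ≤
      ∫ r in a..b, r ^ (n - 1) * Gker s μ t r :=
    intervalIntegral.integral_mono_on hab.le hlow_int hmain_ii hpt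
  have hD : ∫ r in a..b, K * (Real.cos (φ r) ^ 2 * φ' r) =
      K * ((Real.cos (φ b) * Real.sin (φ b) - Real.cos (φ a) * Real.sin (φ a) + φ b - φ a) / 2) := by
    rw [intervalIntegral.integral_const_mul]
    congr 1
    have hcd := intervalIntegral.integral_comp_mul_deriv (a := a) (b := b)
      (f := φ) (f' := φ') (g := fun y => Real.cos y ^ 2)
      (fun x _ => by rw [hφ_def, hφ'_def]; exact phi_deriv t x) hcontφ'.continuousOn (by fun_prop)
    simp only [Function.comp] at hcd
    rw [hcd, integral_cos_sq]
  calc (Real.exp (-(32*μ)) / 28) * t ^ (-(2*s+(n:ℝ))/4) = K * (t ^ ((3:ℝ)/4) / 4) := hval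
    _ ≤ K * ((Real.cos (φ b) * Real.sin (φ b) - Real.cos (φ a) * Real.sin (φ a) + φ b - φ a) / 2) := hE
    _ = ∫ r in a..b, K * (Real.cos (φ r) ^ 2 * φ' r) := hD.symm
    _ ≤ ∫ r in a..b, r ^ (n - 1) * Gker s μ t r := hC
    _ = ∫ r in Ioc a b, r ^ (n - 1) * Gker s μ t r := hB
    _ ≤ ∫ r in Ioi (0:ℝ), r ^ (n - 1) * Gker s μ t r := hA

lemma radial_upper (n : ℕ) (hn : 1 ≤ n) (s μ t : ℝ) (hs : 0 ≤ s) (hμ : 0 < μ) (ht : 0 < t) :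
    ∫ r in Ioi (0:ℝ), r ^ (n - 1) * Gker s μ t r ≤
      ((2*μ) ^ (-(2*s+(n:ℝ))/4) * (1/4) * Real.Gamma ((2*s+n)/4)) * t ^ (-(2*s+(n:ℝ))/4) := by
  have hq : (-1:ℝ) < 2 * s + n - 1 := by
    have : (1:ℝ) ≤ n := by exact_mod_cast hn
    linarith
  have hb : (0:ℝ) < 2 * μ * t := by positivity
  have hint := integrableOn_rpow_mul_exp_neg_mul_rpow hq (by norm_num : (0:ℝ) < 4) hb
  have step1 : ∫ r in Ioi (0:ℝ), r ^ (n - 1) * Gker s μ t r ≤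
      ∫ r in Ioi (0:ℝ), r ^ (2*s+n-1) * Real.exp (-(2*μ*t) * r ^ (4:ℝ)) := by
    refine setIntegral_mono_on (radial_integrable n hn s μ t hs hμ ht) hint measurableSet_Ioi ?_
    exact fun r hr => Gker_bound n hn s μ t hs hr
  have step2 : ∫ r in Ioi (0:ℝ), r ^ (2*s+n-1) * Real.exp (-(2*μ*t) * r ^ (4:ℝ)) =
      (2*μ*t) ^ (-(2*s+(n:ℝ))/4) * (1/4) * Real.Gamma ((2*s+n)/4) := by
    rw [integral_rpow_mul_exp_neg_mul_rpow (by norm_num : (0:ℝ) < 4) hq hb]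
    norm_num
  have step3 : (2*μ*t) ^ (-(2*s+(n:ℝ))/4) = (2*μ) ^ (-(2*s+(n:ℝ))/4) * t ^ (-(2*s+(n:ℝ))/4) :=
    Real.mul_rpow (by positivity) ht.le
  rw [step2, step3] at step1
  linarith [step1]

lemma euclid_radial (n : ℕ) (hn : 1 ≤ n) (s μ t : ℝ) :
    (∫ ξ : EuclideanSpace ℝ (Fin n),
        ‖ξ‖ ^ (2 * s) *
          (Real.cos (‖ξ‖ * t + (1 / 2) * ‖ξ‖ ^ 3 * t) * Real.exp (-μ * ‖ξ‖ ^ 4 * t)) ^ 2)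
      = (n : ℝ) * (volume (Metric.ball (0 : EuclideanSpace ℝ (Fin n)) 1)).toReal *
        ∫ r in Ioi (0:ℝ), r ^ (n - 1) * Gker s μ t r := by
  haveI : Nonempty (Fin n) := ⟨⟨0, hn⟩⟩
  have h := MeasureTheory.integral_fun_norm_addHaar (volume : Measure (EuclideanSpace ℝ (Fin n)))
    (Gker s μ t)
  simp only [finrank_euclideanSpace_fin, nsmul_eq_mul, smul_eq_mul] at h
  show (∫ ξ : EuclideanSpace ℝ (Fin n), Gker s μ t ‖ξ‖) = _
  rw [h, measureReal_def]
  ring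

theorem G0_optimal_Hs_estimate (n : ℕ) (hn : 1 ≤ n) (s μ : ℝ) (hs : 0 ≤ s) (hμ : 0 < μ) :
    ∃ c₁ > (0 : ℝ), ∃ c₂ > (0 : ℝ), ∃ T₀ : ℝ, 1 ≤ T₀ ∧ ∀ t : ℝ, T₀ ≤ t →
      c₁ * t ^ (-(2 * s + (n : ℝ)) / 8) ≤
        (∫ ξ : EuclideanSpace ℝ (Fin n),
          ‖ξ‖ ^ (2 * s) *
            (Real.cos (‖ξ‖ * t + (1 / 2) * ‖ξ‖ ^ 3 * t) * Real.exp (-μ * ‖ξ‖ ^ 4 * t)) ^ 2) ^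
          ((1 : ℝ) / 2) ∧
      (∫ ξ : EuclideanSpace ℝ (Fin n),
          ‖ξ‖ ^ (2 * s) *
            (Real.cos (‖ξ‖ * t + (1 / 2) * ‖ξ‖ ^ 3 * t) * Real.exp (-μ * ‖ξ‖ ^ 4 * t)) ^ 2) ^
          ((1 : ℝ) / 2) ≤ c₂ * t ^ (-(2 * s + (n : ℝ)) / 8) := by
  haveI : Nonempty (Fin n) := ⟨⟨0, hn⟩⟩
  have hn1 : (1:ℝ) ≤ n := by exact_mod_cast hn
  obtain ⟨C, hC_def⟩ : ∃ C : ℝ,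
      C = (n : ℝ) * (volume (Metric.ball (0 : EuclideanSpace ℝ (Fin n)) 1)).toReal := ⟨_, rfl⟩
  have hCpos : 0 < C := by
    rw [hC_def]
    have h1 : 0 < volume (Metric.ball (0 : EuclideanSpace ℝ (Fin n)) 1) :=
      Metric.measure_ball_pos _ _ one_pos
    have h2 : volume (Metric.ball (0 : EuclideanSpace ℝ (Fin n)) 1) < ⊤ := measure_ball_lt_top
    have h3 := ENNReal.toReal_pos h1.ne' h2.ne
    have h4 : (0:ℝ) < n := by linarith
    positivity
  obtain ⟨d₁, hd₁_def⟩ : ∃ d : ℝ, d = Real.exp (-(32*μ)) / 28 := ⟨_, rfl⟩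
  obtain ⟨d₂, hd₂_def⟩ : ∃ d : ℝ,
      d = (2*μ) ^ (-(2*s+(n:ℝ))/4) * (1/4) * Real.Gamma ((2*s+n)/4) := ⟨_, rfl⟩
  have hd₁ : 0 < d₁ := by rw [hd₁_def]; positivity
  have hd₂ : 0 < d₂ := by
    rw [hd₂_def]
    have hg : 0 < Real.Gamma ((2*s+n)/4) := Real.Gamma_pos_of_pos (by linarith)
    have hr := Real.rpow_pos_of_pos (by linarith : (0:ℝ) < 2*μ) (-(2*s+(n:ℝ))/4)
    positivity
  refine ⟨(C*d₁) ^ ((1:ℝ)/2), Real.rpow_pos_of_pos (mul_pos hCpos hd₁) _,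
    (C*d₂) ^ ((1:ℝ)/2), Real.rpow_pos_of_pos (mul_pos hCpos hd₂) _, 16, by norm_num, ?_⟩
  intro t ht
  have ht0 : (0:ℝ) < t := by linarith
  have hIeq := euclid_radial n hn s μ t
  rw [← hC_def] at hIeq
  have hlow := radial_lower n hn s μ hs hμ t ht
  have hup := radial_upper n hn s μ t hs hμ ht0
  rw [← hd₁_def] at hlow
  rw [← hd₂_def] at hup
  have h1 : (C*d₁) * t ^ (-(2*s+(n:ℝ))/4) ≤
      ∫ ξ : EuclideanSpace ℝ (Fin n),
        ‖ξ‖ ^ (2 * s) *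
          (Real.cos (‖ξ‖ * t + (1 / 2) * ‖ξ‖ ^ 3 * t) * Real.exp (-μ * ‖ξ‖ ^ 4 * t)) ^ 2 := by
    rw [hIeq]
    have := mul_le_mul_of_nonneg_left hlow hCpos.le
    calc (C*d₁) * t ^ (-(2*s+(n:ℝ))/4) = C * (d₁ * t ^ (-(2*s+(n:ℝ))/4)) := by ring
      _ ≤ C * ∫ r in Ioi (0:ℝ), r ^ (n - 1) * Gker s μ t r := this
  have h2 : (∫ ξ : EuclideanSpace ℝ (Fin n),
        ‖ξ‖ ^ (2 * s) *
          (Real.cos (‖ξ‖ * t + (1 / 2) * ‖ξ‖ ^ 3 * t) * Real.exp (-μ * ‖ξ‖ ^ 4 * t)) ^ 2) ≤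
      (C*d₂) * t ^ (-(2*s+(n:ℝ))/4) := by
    rw [hIeq]
    have := mul_le_mul_of_nonneg_left hup hCpos.le
    calc C * ∫ r in Ioi (0:ℝ), r ^ (n - 1) * Gker s μ t r
        ≤ C * (d₂ * t ^ (-(2*s+(n:ℝ))/4)) := this
      _ = (C*d₂) * t ^ (-(2*s+(n:ℝ))/4) := by ring
  have htpow : (0:ℝ) ≤ t ^ (-(2*s+(n:ℝ))/4) := (Real.rpow_pos_of_pos ht0 _).le
  have hhalf : ∀ c : ℝ, 0 < c →
      ((c * t ^ (-(2*s+(n:ℝ))/4)) ^ ((1:ℝ)/2) = c ^ ((1:ℝ)/2) * t ^ (-(2 * s + (n:ℝ)) / 8)) := by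
    intro c hc
    rw [Real.mul_rpow hc.le htpow, ← Real.rpow_mul ht0.le]
    congr 1
    ring
  constructor
  · have key := Real.rpow_le_rpow (by positivity) h1 (by norm_num : (0:ℝ) ≤ 1/2)
    rwa [hhalf (C*d₁) (mul_pos hCpos hd₁)] at key
  · have hInonneg : (0:ℝ) ≤ ∫ ξ : EuclideanSpace ℝ (Fin n),
        ‖ξ‖ ^ (2 * s) *
          (Real.cos (‖ξ‖ * t + (1 / 2) * ‖ξ‖ ^ 3 * t) * Real.exp (-μ * ‖ξ‖ ^ 4 * t)) ^ 2 :=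
      integral_nonneg fun ξ => by positivity
    have key := Real.rpow_le_rpow hInonneg h2 (by norm_num : (0:ℝ) ≤ 1/2)
    rwa [hhalf (C*d₂) (mul_pos hCpos hd₂)] at key
end

section
/- Let n = 1, μ > 0, and define Ĝ₁(t,ξ) = |ξ|⁻¹ sin(|ξ|t + (1/2)|ξ|³t) e^{-μ|ξ|⁴t} for ξ ∈ ℝ. Then there exist constants c₁, c₂ > 0 and T₀ ≥ 1 such that for all t ≥ T₀, c₁ √t ≤ (∫_ℝ |Ĝ₁(t,ξ)|² dξ)^{1/2} ≤ c₂ √t. -/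
open MeasureTheory Set Real

private noncomputable def Faux (μ t : ℝ) : ℝ → ℝ := fun x =>
  (x⁻¹ * Real.sin (x * t + (1 / 2) * x ^ 3 * t) * Real.exp (-μ * x ^ 4 * t)) ^ 2

private lemma Faux_nonneg (μ t x : ℝ) : 0 ≤ Faux μ t x := sq_nonneg _

private lemma Faux_meas (μ t : ℝ) : Measurable (Faux μ t) := by
  unfold Faux
  apply Measurable.pow _ measurable_const
  exact ((measurable_id.inv).mul ((measurable_id.mul_const t).add
    (((measurable_id.pow_const 3).const_mul _).mul_const t)).sin).mul
    ((((measurable_id.pow_const 4).const_mul (-μ)).mul_const t).exp)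

private lemma Faux_ub1 (μ t x : ℝ) (hμ : 0 < μ) (ht : 1 ≤ t)
    (hx0 : 0 < x) (hx1 : x ≤ t⁻¹) : Faux μ t x ≤ 9 / 4 * t ^ 2 := by
  have ht0 : (0 : ℝ) < t := lt_of_lt_of_le one_pos ht
  have hti1 : t⁻¹ ≤ 1 := by rw [inv_le_one_iff₀]; right; exact ht
  have hxx : x ≤ 1 := hx1.trans hti1
  unfold Faux
  obtain ⟨θ, hθ⟩ : ∃ y, x * t + 1 / 2 * x ^ 3 * t = y := ⟨_, rfl⟩
  obtain ⟨E, hE⟩ : ∃ y, Real.exp (-μ * x ^ 4 * t) = y := ⟨_, rfl⟩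
  rw [hθ, hE]
  have hθ0 : 0 ≤ θ := by rw [← hθ]; positivity
  have hx2le : x ^ 2 ≤ 1 := by nlinarith
  have hx3le : x ^ 3 ≤ x := by nlinarith [mul_le_mul_of_nonneg_left hx2le hx0.le]
  have hθle : θ ≤ 3 / 2 * (x * t) := by rw [← hθ]; nlinarith [mul_le_mul_of_nonneg_right hx3le ht0.le]
  have hs : Real.sin θ ^ 2 ≤ (3 / 2 * (x * t)) ^ 2 := by
    have h1 : |Real.sin θ| ≤ 3 / 2 * (x * t) := by
      calc |Real.sin θ| ≤ |θ| := Real.abs_sin_le_abs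
        _ = θ := abs_of_nonneg hθ0
        _ ≤ _ := hθle
    rw [← sq_abs]
    exact pow_le_pow_left₀ (abs_nonneg _) h1 2
  have hE0 : 0 < E := hE ▸ Real.exp_pos _
  have hE1 : E ≤ 1 := by
    rw [← hE]
    apply Real.exp_le_one_iff.mpr
    have := mul_nonneg (mul_nonneg hμ.le (pow_nonneg hx0.le 4)) ht0.le
    linarith
  have hx2 : (0 : ℝ) < x ^ 2 := by positivity
  have heq : (x⁻¹ * Real.sin θ * E) ^ 2 = (Real.sin θ * E) ^ 2 / x ^ 2 := by
    rw [div_eq_mul_inv, ← inv_pow]; ring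
  rw [heq, div_le_iff₀ hx2]
  nlinarith [sq_nonneg (Real.sin θ), sq_nonneg E, mul_le_mul_of_nonneg_left hE1 hE0.le]

private lemma Faux_ub2 (μ t x : ℝ) (hμ : 0 < μ) (ht : 1 ≤ t)
    (hx0 : 0 < x) : Faux μ t x ≤ x ^ (-2 : ℝ) := by
  have ht0 : (0 : ℝ) < t := lt_of_lt_of_le one_pos ht
  have hrw : x ^ (-2 : ℝ) = (x ^ 2)⁻¹ := by
    rw [show (-2 : ℝ) = -((2 : ℕ) : ℝ) by norm_num, Real.rpow_neg hx0.le, Real.rpow_natCast]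
  unfold Faux
  obtain ⟨θ, hθ⟩ : ∃ y, x * t + 1 / 2 * x ^ 3 * t = y := ⟨_, rfl⟩
  obtain ⟨E, hE⟩ : ∃ y, Real.exp (-μ * x ^ 4 * t) = y := ⟨_, rfl⟩
  rw [hθ, hE, hrw]
  have hE0 : 0 < E := hE ▸ Real.exp_pos _
  have hE1 : E ≤ 1 := by
    rw [← hE]
    apply Real.exp_le_one_iff.mpr
    have := mul_nonneg (mul_nonneg hμ.le (pow_nonneg hx0.le 4)) ht0.le
    linarith
  have hs : Real.sin θ ^ 2 ≤ 1 := Real.sin_sq_le_one θ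
  have hx2 : (0 : ℝ) < x ^ 2 := by positivity
  have heq : (x⁻¹ * Real.sin θ * E) ^ 2 = (Real.sin θ * E) ^ 2 / x ^ 2 := by
    rw [div_eq_mul_inv, ← inv_pow]; ring
  rw [heq, div_le_iff₀ hx2, inv_mul_cancel₀ (ne_of_gt hx2)]
  nlinarith [sq_nonneg (Real.sin θ), sq_nonneg E, mul_le_mul_of_nonneg_left hE1 hE0.le]

private lemma Faux_lb (μ t x : ℝ) (hμ : 0 < μ) (ht : 1 ≤ t)
    (hx0 : 0 < x) (hx1 : x ≤ t⁻¹) :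
    4 / π ^ 2 * Real.exp (-2 * μ) * t ^ 2 ≤ Faux μ t x := by
  have ht0 : (0 : ℝ) < t := lt_of_lt_of_le one_pos ht
  have hti1 : t⁻¹ ≤ 1 := by rw [inv_le_one_iff₀]; right; exact ht
  have hxx : x ≤ 1 := hx1.trans hti1
  have hxt : x * t ≤ 1 := by
    calc x * t ≤ t⁻¹ * t := by nlinarith
      _ = 1 := inv_mul_cancel₀ (ne_of_gt ht0)
  unfold Faux
  obtain ⟨θ, hθ⟩ : ∃ y, x * t + 1 / 2 * x ^ 3 * t = y := ⟨_, rfl⟩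
  obtain ⟨E, hE⟩ : ∃ y, Real.exp (-μ * x ^ 4 * t) = y := ⟨_, rfl⟩
  rw [hθ, hE]
  have hθ0 : 0 ≤ θ := by rw [← hθ]; positivity
  have hx2le : x ^ 2 ≤ 1 := by nlinarith
  have hx3le : x ^ 3 ≤ x := by nlinarith [mul_le_mul_of_nonneg_left hx2le hx0.le]
  have hθle : θ ≤ 3 / 2 := by
    rw [← hθ]
    nlinarith [mul_le_mul_of_nonneg_right hx3le ht0.le]
  have hθpi : θ ≤ π / 2 := hθle.trans (by nlinarith [Real.pi_gt_three])
  have hxtθ : x * t ≤ θ := by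
    rw [← hθ]
    nlinarith [mul_nonneg (mul_nonneg (by norm_num : (0:ℝ) ≤ 1/2) (pow_nonneg hx0.le 3)) ht0.le]
  have hsin : 2 / π * (x * t) ≤ Real.sin θ := by
    calc 2 / π * (x * t) ≤ 2 / π * θ :=
          mul_le_mul_of_nonneg_left hxtθ (by positivity)
      _ ≤ Real.sin θ := Real.mul_le_sin hθ0 hθpi
  have hsin0 : 0 ≤ 2 / π * (x * t) := by positivity
  have hs : (2 / π * (x * t)) ^ 2 ≤ Real.sin θ ^ 2 := pow_le_pow_left₀ hsin0 hsin 2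
  have hE0 : 0 < E := hE ▸ Real.exp_pos _
  have hx4le : x ^ 4 ≤ x := by
    nlinarith [mul_le_mul_of_nonneg_left hx3le hx0.le, mul_le_mul_of_nonneg_left hxx hx0.le]
  have hx4t : x ^ 4 * t ≤ 1 := by
    nlinarith [mul_le_mul_of_nonneg_right hx4le ht0.le]
  have hEe : Real.exp (-2 * μ) ≤ E ^ 2 := by
    rw [← hE, sq, ← Real.exp_add]
    apply Real.exp_le_exp.mpr
    nlinarith
  have hx2 : (0 : ℝ) < x ^ 2 := by positivity
  have heq : (x⁻¹ * Real.sin θ * E) ^ 2 = (Real.sin θ * E) ^ 2 / x ^ 2 := by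
    rw [div_eq_mul_inv, ← inv_pow]; ring
  rw [heq, le_div_iff₀ hx2]
  have hππ : (0:ℝ) < π := Real.pi_pos
  have hexp0 : 0 < Real.exp (-2 * μ) := Real.exp_pos _
  calc 4 / π ^ 2 * Real.exp (-2 * μ) * t ^ 2 * x ^ 2
      = (2 / π * (x * t)) ^ 2 * Real.exp (-2 * μ) := by field_simp; ring
    _ ≤ Real.sin θ ^ 2 * Real.exp (-2 * μ) :=
        mul_le_mul_of_nonneg_right hs hexp0.le
    _ ≤ Real.sin θ ^ 2 * E ^ 2 :=
        mul_le_mul_of_nonneg_left hEe (sq_nonneg _)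
    _ = (Real.sin θ * E) ^ 2 := by ring

private lemma G1aux (μ : ℝ) (hμ : 0 < μ) (t : ℝ) (ht : 1 ≤ t) :
    8 / π ^ 2 * Real.exp (-2 * μ) * t ≤
      (∫ ξ : ℝ,
        (|ξ|⁻¹ * Real.sin (|ξ| * t + (1 / 2) * |ξ| ^ 3 * t) * Real.exp (-μ * |ξ| ^ 4 * t)) ^ 2) ∧
    (∫ ξ : ℝ,
        (|ξ|⁻¹ * Real.sin (|ξ| * t + (1 / 2) * |ξ| ^ 3 * t) * Real.exp (-μ * |ξ| ^ 4 * t)) ^ 2)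
      ≤ 13 / 2 * t := by
  have ht0 : 0 < t := lt_of_lt_of_le one_pos ht
  have key : (∫ ξ : ℝ,
      (|ξ|⁻¹ * Real.sin (|ξ| * t + (1 / 2) * |ξ| ^ 3 * t) * Real.exp (-μ * |ξ| ^ 4 * t)) ^ 2)
      = 2 * ∫ x in Ioi (0 : ℝ), Faux μ t x := integral_comp_abs (f := Faux μ t)
  have hti : (0 : ℝ) < t⁻¹ := by positivity
  -- integrability
  have h1 : IntegrableOn (Faux μ t) (Ioc (0 : ℝ) t⁻¹) := by
    apply Integrable.mono' (g := fun _ => 9 / 4 * t ^ 2)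
    · exact integrableOn_const measure_Ioc_lt_top.ne
    · exact ((Faux_meas μ t).aestronglyMeasurable).restrict
    · filter_upwards [ae_restrict_mem measurableSet_Ioc] with x hx
      rw [Real.norm_eq_abs, abs_of_nonneg (Faux_nonneg μ t x)]
      exact Faux_ub1 μ t x hμ ht hx.1 hx.2
  have h2 : IntegrableOn (Faux μ t) (Ioi t⁻¹) := by
    apply Integrable.mono' (g := fun x => x ^ (-2 : ℝ))
    · exact integrableOn_Ioi_rpow_of_lt (by norm_num) hti
    · exact ((Faux_meas μ t).aestronglyMeasurable).restrict
    · filter_upwards [ae_restrict_mem measurableSet_Ioi] with x hx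
      rw [Real.norm_eq_abs, abs_of_nonneg (Faux_nonneg μ t x)]
      exact Faux_ub2 μ t x hμ ht (hti.trans hx)
  have hunion : Ioc (0 : ℝ) t⁻¹ ∪ Ioi t⁻¹ = Ioi (0 : ℝ) := Ioc_union_Ioi_eq_Ioi hti.le
  have hJ : IntegrableOn (Faux μ t) (Ioi (0 : ℝ)) := by
    rw [← hunion]; exact h1.union h2
  have hvol : (volume (Ioc (0 : ℝ) t⁻¹)).toReal = t⁻¹ := by
    rw [Real.volume_Ioc, sub_zero, ENNReal.toReal_ofReal hti.le]
  -- upper bound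
  have hsplit : (∫ x in Ioi (0 : ℝ), Faux μ t x)
      = (∫ x in Ioc (0 : ℝ) t⁻¹, Faux μ t x) + ∫ x in Ioi t⁻¹, Faux μ t x := by
    rw [← hunion, setIntegral_union Ioc_disjoint_Ioi_same measurableSet_Ioi h1 h2]
  have hup1 : (∫ x in Ioc (0 : ℝ) t⁻¹, Faux μ t x) ≤ 9 / 4 * t := by
    calc (∫ x in Ioc (0 : ℝ) t⁻¹, Faux μ t x)
        ≤ ∫ _x in Ioc (0 : ℝ) t⁻¹, (9 / 4 * t ^ 2) :=
          setIntegral_mono_on h1 (integrableOn_const measure_Ioc_lt_top.ne)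
            measurableSet_Ioc (fun x hx => Faux_ub1 μ t x hμ ht hx.1 hx.2)
      _ = t⁻¹ * (9 / 4 * t ^ 2) := by rw [setIntegral_const, smul_eq_mul, measureReal_def, hvol]
      _ = 9 / 4 * t := by field_simp
  have hup2 : (∫ x in Ioi t⁻¹, Faux μ t x) ≤ t := by
    calc (∫ x in Ioi t⁻¹, Faux μ t x)
        ≤ ∫ x in Ioi t⁻¹, x ^ (-2 : ℝ) :=
          setIntegral_mono_on h2 (integrableOn_Ioi_rpow_of_lt (by norm_num) hti)
            measurableSet_Ioi (fun x hx => Faux_ub2 μ t x hμ ht (hti.trans hx))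
      _ = -(t⁻¹) ^ ((-2 : ℝ) + 1) / ((-2 : ℝ) + 1) :=
          integral_Ioi_rpow_of_lt (by norm_num) hti
      _ = t := by
          norm_num
          rw [Real.rpow_neg_one, inv_inv]
  -- lower bound
  have hlow : 4 / π ^ 2 * Real.exp (-2 * μ) * t ≤ ∫ x in Ioi (0 : ℝ), Faux μ t x := by
    have step1 : 4 / π ^ 2 * Real.exp (-2 * μ) * t ≤ ∫ x in Ioc (0 : ℝ) t⁻¹, Faux μ t x := by
      calc 4 / π ^ 2 * Real.exp (-2 * μ) * t
          = t⁻¹ * (4 / π ^ 2 * Real.exp (-2 * μ) * t ^ 2) := by field_simp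
        _ = ∫ _x in Ioc (0 : ℝ) t⁻¹, (4 / π ^ 2 * Real.exp (-2 * μ) * t ^ 2) := by
            rw [setIntegral_const, smul_eq_mul, measureReal_def, hvol]
        _ ≤ ∫ x in Ioc (0 : ℝ) t⁻¹, Faux μ t x :=
            setIntegral_mono_on (integrableOn_const measure_Ioc_lt_top.ne) h1
              measurableSet_Ioc (fun x hx => Faux_lb μ t x hμ ht hx.1 hx.2)
    refine step1.trans (setIntegral_mono_set hJ ?_ ?_)
    · filter_upwards with x using Faux_nonneg μ t x
    · exact (Ioc_subset_Ioi_self).eventuallyLE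
  have hup : (∫ x in Ioi (0 : ℝ), Faux μ t x) ≤ 13 / 4 * t := by
    rw [hsplit]; linarith
  constructor
  · rw [key]
    calc 8 / π ^ 2 * Real.exp (-2 * μ) * t
        = 2 * (4 / π ^ 2 * Real.exp (-2 * μ) * t) := by ring
      _ ≤ 2 * ∫ x in Ioi (0 : ℝ), Faux μ t x :=
          mul_le_mul_of_nonneg_left hlow (by norm_num)
  · rw [key]
    calc 2 * ∫ x in Ioi (0 : ℝ), Faux μ t x
        ≤ 2 * (13 / 4 * t) := mul_le_mul_of_nonneg_left hup (by norm_num)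
      _ = 13 / 2 * t := by ring

theorem G1_optimal_L2_growth_dim1 (μ : ℝ) (hμ : 0 < μ) :
    ∃ c₁ > (0 : ℝ), ∃ c₂ > (0 : ℝ), ∃ T₀ : ℝ, 1 ≤ T₀ ∧ ∀ t : ℝ, T₀ ≤ t →
      c₁ * Real.sqrt t ≤
        (∫ ξ : ℝ,
          (|ξ|⁻¹ * Real.sin (|ξ| * t + (1 / 2) * |ξ| ^ 3 * t) * Real.exp (-μ * |ξ| ^ 4 * t)) ^ 2) ^
          ((1 : ℝ) / 2) ∧
      (∫ ξ : ℝ,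
          (|ξ|⁻¹ * Real.sin (|ξ| * t + (1 / 2) * |ξ| ^ 3 * t) * Real.exp (-μ * |ξ| ^ 4 * t)) ^ 2) ^
          ((1 : ℝ) / 2) ≤ c₂ * Real.sqrt t := by
  have hc₁ : (0 : ℝ) < Real.sqrt (8 / Real.pi ^ 2 * Real.exp (-2 * μ)) := by
    apply Real.sqrt_pos.mpr
    positivity
  have hc₂ : (0 : ℝ) < Real.sqrt (13 / 2) := by
    apply Real.sqrt_pos.mpr; norm_num
  refine ⟨_, hc₁, _, hc₂, 1, le_refl 1, fun t ht => ?_⟩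
  obtain ⟨hlow, hup⟩ := G1aux μ hμ t ht
  have ht0 : (0 : ℝ) ≤ t := le_trans zero_le_one ht
  rw [← Real.sqrt_eq_rpow]
  constructor
  · rw [← Real.sqrt_mul (by positivity) t]
    exact Real.sqrt_le_sqrt hlow
  · rw [← Real.sqrt_mul (by norm_num) t]
    exact Real.sqrt_le_sqrt hup
end

section
/- Let n = 2, μ > 0, and define Ĝ₁(t,ξ) = |ξ|⁻¹ sin(|ξ|t + (1/2)|ξ|³t) e^{-μ|ξ|⁴t} for ξ ∈ ℝ². Then there exist constants c₁, c₂ > 0 and T₀ > 1 such that for all t ≥ T₀, c₁ √(ln t) ≤ (∫_{ℝ²} |Ĝ₁(t,ξ)|² dξ)^{1/2} ≤ c₂ √(ln t). -/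
open MeasureTheory Set

private lemma aux_cos_bound (t : ℝ) (ht : 1 ≤ t) :
    |∫ r in (t⁻¹)..(t ^ (-(1/4) : ℝ)), Real.cos (2*r*t + r^3*t) / r| ≤ 1 := by
  have ht0 : (0:ℝ) < t := lt_of_lt_of_le one_pos ht
  set a : ℝ := t⁻¹ with hadef
  set b : ℝ := t ^ (-(1/4) : ℝ) with hbdef
  have ha0 : 0 < a := inv_pos.2 ht0
  have hab : a ≤ b := by
    rw [hadef, ← Real.rpow_neg_one t]
    exact Real.rpow_le_rpow_of_exponent_le ht (by norm_num)
  have huIcc : uIcc a b = Icc a b := uIcc_of_le hab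
  have hpos : ∀ x ∈ uIcc a b, 0 < x := by
    intro x hx
    rw [huIcc] at hx
    exact lt_of_lt_of_le ha0 hx.1
  -- functions
  set u : ℝ → ℝ := fun r => (2*r*t + 3*r^3*t)⁻¹ with hu
  set u' : ℝ → ℝ := fun r => -(2*t + 9*r^2*t) / (2*r*t + 3*r^3*t)^2 with hu'
  set v : ℝ → ℝ := fun r => Real.sin (2*r*t + r^3*t) with hv
  set v' : ℝ → ℝ := fun r => Real.cos (2*r*t + r^3*t) * (2*t + 3*r^2*t) with hv'
  have hdpos : ∀ x ∈ uIcc a b, 0 < 2*x*t + 3*x^3*t := by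
    intro x hx; have := hpos x hx; positivity
  have hderiv_d : ∀ x : ℝ, HasDerivAt (fun r : ℝ => 2*r*t + 3*r^3*t) (2*t + 9*x^2*t) x := by
    intro x
    have h := (((hasDerivAt_id x).mul_const t).const_mul 2).add
      (((hasDerivAt_pow 3 x).mul_const t).const_mul 3)
    convert h using 1
    · rfl
    · rfl
    · funext r; simp only [Pi.add_apply, id_eq]; ring
    · norm_num; ring
  have hderiv_u : ∀ x ∈ uIcc a b, HasDerivAt u (u' x) x := by
    intro x hx
    have h := (hderiv_d x).inv (ne_of_gt (hdpos x hx))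
    exact h
  have hderiv_v : ∀ x : ℝ, HasDerivAt v (v' x) x := by
    intro x
    have hφ : HasDerivAt (fun r : ℝ => 2*r*t + r^3*t) (2*t + 3*x^2*t) x := by
      have h := (((hasDerivAt_id x).mul_const t).const_mul 2).add
        ((hasDerivAt_pow 3 x).mul_const t)
      convert h using 1
      · rfl
      · rfl
      · funext r; simp only [Pi.add_apply, id_eq]; ring
      · push_cast; ring
    simpa [hv, hv', mul_comm] using hφ.sin
  have hu'cont : ContinuousOn u' (uIcc a b) := by
    apply ContinuousOn.div
    · fun_prop
    · fun_prop
    · intro x hx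
      have := hdpos x hx
      positivity
  have hu'int : IntervalIntegrable u' volume a b := hu'cont.intervalIntegrable
  have hv'int : IntervalIntegrable v' volume a b := (by fun_prop : Continuous v').intervalIntegrable _ _
  have hparts := intervalIntegral.integral_mul_deriv_eq_deriv_mul hderiv_u (fun x _ => hderiv_v x) hu'int hv'int
  have hcongr : ∫ r in a..b, Real.cos (2*r*t + r^3*t) / r = ∫ x in a..b, u x * v' x := by
    apply intervalIntegral.integral_congr
    intro x hx
    have hx0 := hpos x hx
    have h1 : 2*x*t + 3*x^3*t = x * (2*t + 3*x^2*t) := by ring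
    have h2 : (0:ℝ) < 2*t + 3*x^2*t := by positivity
    simp only [hu, hv']
    rw [h1]
    field_simp
  -- FTC for u'
  have hftc : ∫ x in a..b, u' x = u b - u a :=
    intervalIntegral.integral_eq_sub_of_hasDerivAt hderiv_u hu'int
  -- bound on ∫ u' v
  have hbound1 : |∫ x in a..b, u' x * v x| ≤ u a - u b := by
    calc |∫ x in a..b, u' x * v x| ≤ ∫ x in a..b, |u' x * v x| :=
          intervalIntegral.abs_integral_le_integral_abs hab
      _ ≤ ∫ x in a..b, -u' x := by
          apply intervalIntegral.integral_mono_on hab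
            ((hu'cont.mul ((by fun_prop : Continuous v).continuousOn)).abs.intervalIntegrable)
            hu'int.neg
          intro x hx
          rw [← huIcc] at hx
          have hd := hdpos x hx
          have hu'neg : u' x ≤ 0 := by
            rw [hu']
            apply div_nonpos_of_nonpos_of_nonneg
            · have := hpos x hx; nlinarith
            · positivity
          have hvle : |v x| ≤ 1 := by rw [hv]; exact Real.abs_sin_le_one _
          calc |u' x * v x| = |u' x| * |v x| := abs_mul _ _
            _ ≤ |u' x| * 1 := mul_le_mul_of_nonneg_left hvle (abs_nonneg _)
            _ = -u' x := by rw [mul_one, abs_of_nonpos hu'neg]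
      _ = u a - u b := by rw [intervalIntegral.integral_neg, hftc]; ring
  -- endpoint bounds
  have hat : a * t = 1 := inv_mul_cancel₀ ht0.ne'
  have ha3t : 0 < a^3*t := by positivity
  have hb0 : 0 < b := lt_of_lt_of_le ha0 hab
  have hda2 : (2:ℝ) ≤ 2*a*t + 3*a^3*t := by nlinarith
  have hdab : 2*a*t + 3*a^3*t ≤ 2*b*t + 3*b^3*t := by nlinarith [pow_le_pow_left₀ ha0.le hab 3]
  have hda0 : (0:ℝ) < 2*a*t + 3*a^3*t := by linarith
  have hua : u a ≤ 1/2 := by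
    rw [hu]
    calc (2*a*t + 3*a^3*t)⁻¹ ≤ (2:ℝ)⁻¹ := by
          exact inv_anti₀ two_pos hda2
      _ = 1/2 := by norm_num
  have hub0 : 0 ≤ u b := by
    rw [hu]
    have : (0:ℝ) < 2*b*t + 3*b^3*t := by positivity
    positivity
  have hub : u b ≤ u a := by
    rw [hu]
    exact inv_anti₀ hda0 hdab
  have hva : |v a| ≤ 1 := Real.abs_sin_le_one _
  have hvb : |v b| ≤ 1 := Real.abs_sin_le_one _
  rw [hcongr, hparts]
  set I2 : ℝ := ∫ x in a..b, u' x * v x with hI2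
  have hX : |u b * v b| ≤ u b := by
    rw [abs_mul, abs_of_nonneg hub0]
    exact mul_le_of_le_one_right hub0 hvb
  have hY : |u a * v a| ≤ u a := by
    have hua0 : 0 ≤ u a := le_trans hub0 hub
    rw [abs_mul, abs_of_nonneg hua0]
    exact mul_le_of_le_one_right hua0 hva
  have htri : |u b * v b - u a * v a - I2| ≤ |u b * v b| + |u a * v a| + |I2| := by
    have t1 : u b * v b - u a * v a - I2 = u b * v b + (-(u a * v a) + -I2) := by ring
    rw [t1]
    refine (abs_add_le _ _).trans ?_
    have := (abs_add_le (-(u a * v a)) (-I2)).trans_eq (by rw [abs_neg, abs_neg])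
    linarith
  linarith

private lemma aux_f_meas (μ t : ℝ) : Measurable (fun r : ℝ =>
      r * (r⁻¹ * Real.sin (r * t + (1/2) * r^3 * t) * Real.exp (-μ * r^4 * t))^2) := by
  fun_prop

private lemma aux_f_nonneg (μ t : ℝ) {r : ℝ} (hr : 0 < r) :
    0 ≤ r * (r⁻¹ * Real.sin (r * t + (1/2) * r^3 * t) * Real.exp (-μ * r^4 * t))^2 := by
  positivity

-- f r = r⁻¹ sin² exp² for r > 0; basic bound f ≤ r⁻¹ and f ≤ (9/4) t² r (for r ≤ 1, t ≥ 1, μ ≥ 0)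
private lemma aux_f_eq (μ t : ℝ) {r : ℝ} (hr : 0 < r) :
    r * (r⁻¹ * Real.sin (r * t + (1/2) * r^3 * t) * Real.exp (-μ * r^4 * t))^2
      = r⁻¹ * Real.sin (r * t + (1/2) * r^3 * t)^2 * Real.exp (-(2*μ) * r^4 * t) := by
  have h2 : Real.exp (-μ * r^4 * t)^2 = Real.exp (-(2*μ) * r^4 * t) := by
    rw [sq, ← Real.exp_add]; ring_nf
  have h3 : r * (r⁻¹)^2 = r⁻¹ := by field_simp
  calc r * (r⁻¹ * Real.sin (r * t + (1/2) * r^3 * t) * Real.exp (-μ * r^4 * t))^2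
      = (r * (r⁻¹)^2) * Real.sin (r * t + (1/2) * r^3 * t)^2 * Real.exp (-μ * r^4 * t)^2 := by
        ring
    _ = _ := by rw [h3, h2]

private lemma aux_f_le_inv (μ t : ℝ) (hμ : 0 ≤ μ) (ht : 0 ≤ t) {r : ℝ} (hr : 0 < r) :
    r * (r⁻¹ * Real.sin (r * t + (1/2) * r^3 * t) * Real.exp (-μ * r^4 * t))^2 ≤ r⁻¹ := by
  rw [aux_f_eq μ t hr]
  have hs : Real.sin (r * t + (1/2) * r^3 * t)^2 ≤ 1 := Real.sin_sq_le_one _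
  have he : Real.exp (-(2*μ) * r^4 * t) ≤ 1 := by
    rw [show (1:ℝ) = Real.exp 0 by simp]
    apply Real.exp_le_exp.2
    have : 0 ≤ 2*μ*r^4*t := by positivity
    nlinarith
  have h1 : 0 ≤ Real.sin (r * t + (1/2) * r^3 * t)^2 := sq_nonneg _
  have h2 : 0 < Real.exp (-(2*μ) * r^4 * t) := Real.exp_pos _
  have h3 : (0:ℝ) < r⁻¹ := by positivity
  calc r⁻¹ * Real.sin (r * t + (1/2) * r^3 * t)^2 * Real.exp (-(2*μ) * r^4 * t)
      = r⁻¹ * (Real.sin (r * t + (1/2) * r^3 * t)^2 * Real.exp (-(2*μ) * r^4 * t)) := by ring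
    _ ≤ r⁻¹ * 1 := mul_le_mul_of_nonneg_left (by nlinarith) h3.le
    _ = r⁻¹ := mul_one _

private lemma aux_f_le_lin (μ t : ℝ) (hμ : 0 ≤ μ) (ht : 1 ≤ t) {r : ℝ} (hr : 0 < r) (hr1 : r ≤ 1) :
    r * (r⁻¹ * Real.sin (r * t + (1/2) * r^3 * t) * Real.exp (-μ * r^4 * t))^2
      ≤ 9/4 * t^2 * r := by
  rw [aux_f_eq μ t hr]
  have ht0 : (0:ℝ) < t := lt_of_lt_of_le one_pos ht
  set θ := r * t + (1/2) * r^3 * t with hθ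
  have hθ0 : 0 ≤ θ := by positivity
  have hsin : Real.sin θ ^ 2 ≤ θ^2 := Real.sin_sq_le_sq
  have hr3 : r^3 ≤ r := by
    have := pow_le_pow_of_le_one hr.le hr1 (by norm_num : 1 ≤ 3)
    simpa using this
  have hθle : θ ≤ 3/2 * (r * t) := by rw [hθ]; nlinarith
  have hθsq : θ^2 ≤ 9/4 * r^2 * t^2 := by
    have := pow_le_pow_left₀ hθ0 hθle 2
    nlinarith
  have he : Real.exp (-(2*μ) * r^4 * t) ≤ 1 := by
    rw [show (1:ℝ) = Real.exp 0 by simp]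
    apply Real.exp_le_exp.2
    have : 0 ≤ 2*μ*r^4*t := by positivity
    nlinarith
  have hinv : (0:ℝ) < r⁻¹ := by positivity
  have hrr : r⁻¹ * (9/4 * r^2 * t^2) = 9/4 * t^2 * r := by field_simp
  calc r⁻¹ * Real.sin θ^2 * Real.exp (-(2*μ) * r^4 * t)
      ≤ r⁻¹ * Real.sin θ^2 * 1 :=
        mul_le_mul_of_nonneg_left he (by positivity)
    _ = r⁻¹ * Real.sin θ^2 := mul_one _
    _ ≤ r⁻¹ * (9/4 * r^2 * t^2) :=
        mul_le_mul_of_nonneg_left (le_trans hsin hθsq) hinv.le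
    _ = 9/4 * t^2 * r := hrr

private lemma aux_f_le_exp (μ t : ℝ) (hμ : 0 < μ) (ht : 1 ≤ t) {r : ℝ} (hr : 1 ≤ r) :
    r * (r⁻¹ * Real.sin (r * t + (1/2) * r^3 * t) * Real.exp (-μ * r^4 * t))^2
      ≤ Real.exp (-(2*μ) * r) := by
  have hr0 : (0:ℝ) < r := lt_of_lt_of_le one_pos hr
  rw [aux_f_eq μ t hr0]
  have hs : Real.sin (r * t + (1/2) * r^3 * t)^2 ≤ 1 := Real.sin_sq_le_one _
  have hinv : r⁻¹ ≤ 1 := by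
    rw [inv_le_one_iff₀]; right; exact hr
  have he : Real.exp (-(2*μ) * r^4 * t) ≤ Real.exp (-(2*μ) * r) := by
    apply Real.exp_le_exp.2
    have h4 : r ≤ r^4 := le_self_pow₀ hr (by norm_num)
    have : r ≤ r^4*t := by nlinarith
    nlinarith [hμ.le]
  have h2 : 0 < Real.exp (-(2*μ) * r^4 * t) := Real.exp_pos _
  have h1 : 0 ≤ Real.sin (r * t + (1/2) * r^3 * t)^2 := sq_nonneg _
  have hinv0 : (0:ℝ) < r⁻¹ := by positivity
  calc r⁻¹ * Real.sin (r * t + (1/2) * r^3 * t)^2 * Real.exp (-(2*μ) * r^4 * t)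
      ≤ 1 * 1 * Real.exp (-(2*μ) * r) := by
        apply mul_le_mul _ he h2.le (by norm_num)
        nlinarith
    _ = Real.exp (-(2*μ) * r) := by ring

private lemma aux_f_integrable (μ t : ℝ) (hμ : 0 < μ) (ht : 1 ≤ t) :
    IntegrableOn (fun r : ℝ =>
      r * (r⁻¹ * Real.sin (r * t + (1/2) * r^3 * t) * Real.exp (-μ * r^4 * t))^2)
      (Ioi 0) := by
  have hmeas := aux_f_meas μ t
  have h1 : IntegrableOn (fun r : ℝ =>
      r * (r⁻¹ * Real.sin (r * t + (1/2) * r^3 * t) * Real.exp (-μ * r^4 * t))^2)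
      (Ioc 0 1) := by
    have ht0 : (0:ℝ) < t := lt_of_lt_of_le one_pos ht
    apply Measure.integrableOn_of_bounded (M := 9/4 * t^2) measure_Ioc_lt_top.ne
      hmeas.aestronglyMeasurable
    filter_upwards [ae_restrict_mem measurableSet_Ioc] with r hr
    rw [Real.norm_eq_abs, abs_of_nonneg (aux_f_nonneg μ t hr.1)]
    calc r * (r⁻¹ * Real.sin (r * t + (1/2) * r^3 * t) * Real.exp (-μ * r^4 * t))^2
        ≤ 9/4 * t^2 * r := aux_f_le_lin μ t hμ.le ht hr.1 hr.2
      _ ≤ 9/4 * t^2 := by nlinarith [hr.2, sq_nonneg t]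
  have h2 : IntegrableOn (fun r : ℝ =>
      r * (r⁻¹ * Real.sin (r * t + (1/2) * r^3 * t) * Real.exp (-μ * r^4 * t))^2)
      (Ioi 1) := by
    apply Integrable.mono (exp_neg_integrableOn_Ioi 1 (by positivity : (0:ℝ) < 2*μ))
      hmeas.aestronglyMeasurable.restrict
    filter_upwards [ae_restrict_mem measurableSet_Ioi] with r hr
    rw [Real.norm_eq_abs, Real.norm_eq_abs,
      abs_of_nonneg (aux_f_nonneg μ t (lt_of_lt_of_le one_pos (le_of_lt hr))),
      abs_of_nonneg (Real.exp_pos _).le]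
    exact aux_f_le_exp μ t hμ ht (le_of_lt hr)
  have : Ioi (0:ℝ) = Ioc 0 1 ∪ Ioi 1 := (Ioc_union_Ioi_eq_Ioi zero_le_one).symm
  rw [this]
  exact h1.union h2

private lemma aux_exp_integral (c : ℝ) (hc : 0 < c) :
    ∫ x in Ioi (1:ℝ), Real.exp (-c * x) = Real.exp (-c) / c := by
  have hderiv : ∀ x ∈ Ioi (1:ℝ), HasDerivAt (fun y => -Real.exp (-c * y) / c)
      (Real.exp (-c * x)) x := by
    intro x _
    have h := (((hasDerivAt_id x).const_mul (-c)).exp).neg.div_const c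
    convert h using 1
    · rfl
    · rfl
    · funext y; simp [neg_div]
    field_simp
    rfl
  have hcont : ContinuousWithinAt (fun y => -Real.exp (-c * y) / c) (Ici (1:ℝ)) 1 :=
    (Continuous.continuousWithinAt (by fun_prop))
  have htend : Filter.Tendsto (fun y => -Real.exp (-c * y) / c) Filter.atTop (nhds 0) := by
    have h1 : Filter.Tendsto (fun y : ℝ => -c * y) Filter.atTop Filter.atBot :=
      Filter.tendsto_id.const_mul_atTop_of_neg (neg_neg_iff_pos.2 hc)
    have h2 := (Real.tendsto_exp_atBot.comp h1).neg.div_const c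
    simpa using h2
  have := integral_Ioi_of_hasDerivAt_of_tendsto hcont hderiv
    (exp_neg_integrableOn_Ioi 1 hc) htend
  rw [this]
  field_simp
  ring

private lemma aux_upper (μ t : ℝ) (hμ : 0 < μ) (ht : Real.exp 2 ≤ t) :
    (∫ r in Ioi (0:ℝ),
      r * (r⁻¹ * Real.sin (r * t + (1/2) * r^3 * t) * Real.exp (-μ * r^4 * t))^2)
      ≤ (1 + 9/8 + 1/(2*μ)) * Real.log t := by
  have ht1 : (1:ℝ) ≤ t := by nlinarith [Real.add_one_le_exp (2:ℝ)]
  have ht0 : (0:ℝ) < t := lt_of_lt_of_le one_pos ht1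
  have hL : (1:ℝ) ≤ Real.log t := by
    calc (1:ℝ) ≤ 2 := one_le_two
      _ = Real.log (Real.exp 2) := (Real.log_exp 2).symm
      _ ≤ Real.log t := Real.log_le_log (Real.exp_pos 2) ht
  set a : ℝ := t⁻¹ with hadef
  have ha0 : 0 < a := inv_pos.2 ht0
  have ha1 : a ≤ 1 := by rw [hadef]; exact inv_le_one_of_one_le₀ ht1
  set f : ℝ → ℝ := fun r =>
    r * (r⁻¹ * Real.sin (r * t + (1/2) * r^3 * t) * Real.exp (-μ * r^4 * t))^2 with hfdef
  have hint := aux_f_integrable μ t hμ ht1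
  have hint1 : IntegrableOn f (Ioc 0 a) := hint.mono_set (fun x hx => hx.1)
  have hint2 : IntegrableOn f (Ioc a 1) := hint.mono_set (fun x hx => lt_of_lt_of_le ha0 hx.1.le)
  have hint3 : IntegrableOn f (Ioi 1) := hint.mono_set (fun x hx => show (0:ℝ) < x from lt_of_lt_of_le one_pos (le_of_lt hx))
  have hsplit : ∫ r in Ioi (0:ℝ), f r =
      (∫ r in Ioc 0 a, f r) + (∫ r in Ioc a 1, f r) + (∫ r in Ioi 1, f r) := by
    rw [← setIntegral_union (Ioc_disjoint_Ioc_of_le le_rfl) measurableSet_Ioc hint1 hint2,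
      Ioc_union_Ioc_eq_Ioc ha0.le ha1,
      ← setIntegral_union (Ioc_disjoint_Ioi le_rfl) measurableSet_Ioi
        (hint1.union hint2 |>.mono_set (by rw [Ioc_union_Ioc_eq_Ioc ha0.le ha1])) hint3,
      Ioc_union_Ioi_eq_Ioi zero_le_one]
  have hT1 : (∫ r in Ioc 0 a, f r) ≤ 9/8 := by
    have hmono : (∫ r in Ioc 0 a, f r) ≤ ∫ r in Ioc 0 a, 9/4 * t^2 * r := by
      apply setIntegral_mono_on hint1
        ((continuous_const.mul continuous_id).integrableOn_Ioc) measurableSet_Ioc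
      intro r hr
      exact aux_f_le_lin μ t hμ.le ht1 hr.1 (le_trans hr.2 ha1)
    have hcalc : ∫ r in Ioc 0 a, 9/4 * t^2 * r = 9/8 := by
      rw [← intervalIntegral.integral_of_le ha0.le]
      rw [show (fun r : ℝ => 9/4 * t^2 * r) = (fun r : ℝ => (9/4 * t^2) * r) by rfl]
      rw [intervalIntegral.integral_const_mul, integral_id]
      rw [hadef]
      field_simp
      ring
    linarith
  have hT2 : (∫ r in Ioc a 1, f r) ≤ Real.log t := by
    have hcO : ContinuousOn (fun r : ℝ => r⁻¹) (Icc a 1) :=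
      ContinuousOn.inv₀ continuousOn_id (fun x hx => ne_of_gt (lt_of_lt_of_le ha0 hx.1))
    have hmono : (∫ r in Ioc a 1, f r) ≤ ∫ r in Ioc a 1, r⁻¹ := by
      apply setIntegral_mono_on hint2 (hcO.integrableOn_Icc.mono_set Ioc_subset_Icc_self)
        measurableSet_Ioc
      intro r hr
      exact aux_f_le_inv μ t hμ.le ht0.le (lt_trans ha0 hr.1)
    have hcalc : ∫ r in Ioc a 1, (r:ℝ)⁻¹ = Real.log t := by
      rw [← intervalIntegral.integral_of_le ha1, integral_inv]
      · rw [hadef, one_div, inv_inv]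
      · rw [uIcc_of_le ha1]
        intro h
        exact absurd h.1 (not_le.2 ha0)
    linarith
  have hT3 : (∫ r in Ioi (1:ℝ), f r) ≤ 1/(2*μ) := by
    have h2μ : (0:ℝ) < 2*μ := by positivity
    have hmono : (∫ r in Ioi (1:ℝ), f r) ≤ ∫ r in Ioi (1:ℝ), Real.exp (-(2*μ)*r) := by
      apply setIntegral_mono_on hint3 (exp_neg_integrableOn_Ioi 1 h2μ) measurableSet_Ioi
      intro r hr
      exact aux_f_le_exp μ t hμ ht1 hr.le
    have hcalc : ∫ r in Ioi (1:ℝ), Real.exp (-(2*μ)*r) = Real.exp (-(2*μ))/(2*μ) :=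
      aux_exp_integral _ h2μ
    have hle1 : Real.exp (-(2*μ)) ≤ 1 := Real.exp_le_one_iff.2 (by linarith)
    have : Real.exp (-(2*μ))/(2*μ) ≤ 1/(2*μ) := by gcongr
    linarith
  have h9 : (9:ℝ)/8 ≤ 9/8 * Real.log t := by nlinarith
  have hmu : 1/(2*μ) ≤ 1/(2*μ) * Real.log t := by
    have h0 : (0:ℝ) < 1/(2*μ) := by positivity
    nlinarith
  calc (∫ r in Ioi (0:ℝ), f r)
      = (∫ r in Ioc 0 a, f r) + (∫ r in Ioc a 1, f r) + (∫ r in Ioi 1, f r) := hsplit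
    _ ≤ 9/8 + Real.log t + 1/(2*μ) := by linarith
    _ ≤ (1 + 9/8 + 1/(2*μ)) * Real.log t := by nlinarith

private lemma aux_lower (μ t : ℝ) (hμ : 0 < μ) (ht : Real.exp 2 ≤ t) :
    Real.exp (-(2*μ)) / 8 * Real.log t ≤
    (∫ r in Ioi (0:ℝ),
      r * (r⁻¹ * Real.sin (r * t + (1/2) * r^3 * t) * Real.exp (-μ * r^4 * t))^2) := by
  have ht1 : (1:ℝ) ≤ t := by nlinarith [Real.add_one_le_exp (2:ℝ)]
  have ht0 : (0:ℝ) < t := lt_of_lt_of_le one_pos ht1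
  have hL : (2:ℝ) ≤ Real.log t := by
    calc (2:ℝ) = Real.log (Real.exp 2) := (Real.log_exp 2).symm
      _ ≤ Real.log t := Real.log_le_log (Real.exp_pos 2) ht
  set a : ℝ := t⁻¹ with hadef
  set b : ℝ := t ^ (-(1/4) : ℝ) with hbdef
  have ha0 : 0 < a := inv_pos.2 ht0
  have hab : a ≤ b := by
    rw [hadef, ← Real.rpow_neg_one t]
    exact Real.rpow_le_rpow_of_exponent_le ht1 (by norm_num)
  have hb0 : 0 < b := lt_of_lt_of_le ha0 hab
  have hb4 : b^4 = t⁻¹ := by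
    rw [hbdef, ← Real.rpow_natCast (t ^ (-(1/4):ℝ)) 4, ← Real.rpow_mul ht0.le]
    norm_num
    exact (Real.rpow_neg_one t) |>.symm ▸ by rw [← Real.rpow_neg_one t]
  set f : ℝ → ℝ := fun r =>
    r * (r⁻¹ * Real.sin (r * t + (1/2) * r^3 * t) * Real.exp (-μ * r^4 * t))^2 with hfdef
  set g : ℝ → ℝ := fun r =>
    Real.exp (-(2*μ)) * (r⁻¹ * Real.sin (r * t + (1/2) * r^3 * t)^2) with hgdef
  have hint := aux_f_integrable μ t hμ ht1
  -- continuity of pieces on [a, b]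
  have hcinv : ContinuousOn (fun r : ℝ => r⁻¹) (Icc a b) :=
    ContinuousOn.inv₀ continuousOn_id (fun x hx => ne_of_gt (lt_of_lt_of_le ha0 hx.1))
  have hgcont : ContinuousOn g (Icc a b) := by
    apply ContinuousOn.mul continuousOn_const
    exact hcinv.mul (Continuous.continuousOn (by fun_prop))
  -- step 1
  have hstep1 : (∫ r in Ioc a b, f r) ≤ ∫ r in Ioi (0:ℝ), f r := by
    apply setIntegral_mono_set hint
    · filter_upwards [ae_restrict_mem measurableSet_Ioi] with r hr
      exact aux_f_nonneg μ t hr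
    · exact HasSubset.Subset.eventuallyLE (fun x hx => lt_of_lt_of_le ha0 hx.1.le)
  -- step 2
  have hstep2 : (∫ r in Ioc a b, g r) ≤ ∫ r in Ioc a b, f r := by
    apply setIntegral_mono_on (hgcont.integrableOn_Icc.mono_set Ioc_subset_Icc_self)
      (hint.mono_set (fun x hx => lt_of_lt_of_le ha0 hx.1.le)) measurableSet_Ioc
    intro r hr
    have hr0 : 0 < r := lt_trans ha0 hr.1
    rw [aux_f_eq μ t hr0]
    have hr4 : r^4 * t ≤ 1 := by
      have h1 : r^4 ≤ b^4 := pow_le_pow_left₀ hr0.le hr.2 4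
      rw [hb4] at h1
      calc r^4 * t ≤ t⁻¹ * t := by nlinarith
        _ = 1 := inv_mul_cancel₀ ht0.ne'
    have hexp : Real.exp (-(2*μ)) ≤ Real.exp (-(2*μ) * r^4 * t) := by
      apply Real.exp_le_exp.2
      have h2 : 0 < 2*μ := by positivity
      nlinarith
    simp only [hgdef]
    have hnn : 0 ≤ r⁻¹ * Real.sin (r * t + (1/2) * r^3 * t)^2 := by positivity
    calc Real.exp (-(2*μ)) * (r⁻¹ * Real.sin (r * t + (1/2) * r^3 * t)^2)
        ≤ Real.exp (-(2*μ) * r^4 * t) * (r⁻¹ * Real.sin (r * t + (1/2) * r^3 * t)^2) :=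
          mul_le_mul_of_nonneg_right hexp hnn
      _ = r⁻¹ * Real.sin (r * t + (1/2) * r^3 * t)^2 * Real.exp (-(2*μ) * r^4 * t) := by ring
  -- step 3: compute ∫ g
  have hstep3 : (∫ r in Ioc a b, g r)
      = Real.exp (-(2*μ)) * ∫ r in a..b, r⁻¹ * Real.sin (r * t + (1/2) * r^3 * t)^2 := by
    rw [intervalIntegral.integral_of_le hab, hgdef]
    exact integral_const_mul _ _
  -- step 4: sin² expansion
  have huIcc : uIcc a b = Icc a b := uIcc_of_le hab
  have h0uIcc : (0:ℝ) ∉ uIcc a b := by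
    rw [huIcc]
    intro h
    exact absurd h.1 (not_le.2 ha0)
  have hiiInv : IntervalIntegrable (fun r : ℝ => r⁻¹) volume a b := by
    apply ContinuousOn.intervalIntegrable
    rw [huIcc]; exact hcinv
  have hiiCos : IntervalIntegrable (fun r : ℝ => Real.cos (2*r*t + r^3*t) / r) volume a b := by
    apply ContinuousOn.intervalIntegrable
    rw [huIcc]
    exact (Continuous.continuousOn (by fun_prop)).div continuousOn_id
      (fun x hx => ne_of_gt (lt_of_lt_of_le ha0 hx.1))
  have hstep4 : ∫ r in a..b, r⁻¹ * Real.sin (r * t + (1/2) * r^3 * t)^2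
      = 1/2 * (∫ r in a..b, r⁻¹) - 1/2 * ∫ r in a..b, Real.cos (2*r*t + r^3*t) / r := by
    have hcongr : ∫ r in a..b, r⁻¹ * Real.sin (r * t + (1/2) * r^3 * t)^2
        = ∫ r in a..b, (1/2 * r⁻¹ - 1/2 * (Real.cos (2*r*t + r^3*t) / r)) := by
      apply intervalIntegral.integral_congr
      intro x hx
      have hx0 : 0 < x := lt_of_lt_of_le ha0 (by rw [huIcc] at hx; exact hx.1)
      have hsq := Real.sin_sq_eq_half_sub (x * t + (1/2) * x^3 * t)
      have harg : 2 * (x * t + (1/2) * x^3 * t) = 2*x*t + x^3*t := by ring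
      rw [harg] at hsq
      simp only
      rw [hsq, div_eq_mul_inv, div_eq_mul_inv]
      ring
    rw [hcongr, intervalIntegral.integral_sub ((hiiInv.const_mul _)) ((hiiCos.const_mul _)),
      intervalIntegral.integral_const_mul, intervalIntegral.integral_const_mul]
  -- step 6: log integral
  have hstep6 : ∫ r in a..b, (r:ℝ)⁻¹ = 3/4 * Real.log t := by
    rw [integral_inv h0uIcc]
    have hba : b / a = t ^ ((3:ℝ)/4) := by
      rw [hadef, hbdef, ← Real.rpow_neg_one t, ← Real.rpow_sub ht0]
      norm_num
    rw [hba, Real.log_rpow ht0]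
  -- combine
  have hcos := aux_cos_bound t ht1
  rw [← hadef, ← hbdef] at hcos
  have habs := abs_le.1 hcos
  have hexp0 : 0 < Real.exp (-(2*μ)) := Real.exp_pos _
  have hkey : 3/8 * Real.log t - 1/2 ≤ ∫ r in a..b, r⁻¹ * Real.sin (r * t + (1/2) * r^3 * t)^2 := by
    rw [hstep4, hstep6]
    linarith
  calc Real.exp (-(2*μ)) / 8 * Real.log t
      ≤ Real.exp (-(2*μ)) * (3/8 * Real.log t - 1/2) := by nlinarith
    _ ≤ Real.exp (-(2*μ)) * ∫ r in a..b, r⁻¹ * Real.sin (r * t + (1/2) * r^3 * t)^2 := by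
        exact mul_le_mul_of_nonneg_left hkey hexp0.le
    _ = ∫ r in Ioc a b, g r := hstep3.symm
    _ ≤ ∫ r in Ioc a b, f r := hstep2
    _ ≤ _ := hstep1

theorem G1_optimal_L2_log_growth_dim2 (μ : ℝ) (hμ : 0 < μ) :
    ∃ c₁ > (0 : ℝ), ∃ c₂ > (0 : ℝ), ∃ T₀ : ℝ, 1 < T₀ ∧ ∀ t : ℝ, T₀ ≤ t →
      c₁ * Real.sqrt (Real.log t) ≤
        (∫ ξ : EuclideanSpace ℝ (Fin 2),
          (‖ξ‖⁻¹ * Real.sin (‖ξ‖ * t + (1 / 2) * ‖ξ‖ ^ 3 * t) * Real.exp (-μ * ‖ξ‖ ^ 4 * t)) ^ 2) ^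
          ((1 : ℝ) / 2) ∧
      (∫ ξ : EuclideanSpace ℝ (Fin 2),
          (‖ξ‖⁻¹ * Real.sin (‖ξ‖ * t + (1 / 2) * ‖ξ‖ ^ 3 * t) * Real.exp (-μ * ‖ξ‖ ^ 4 * t)) ^ 2) ^
          ((1 : ℝ) / 2) ≤ c₂ * Real.sqrt (Real.log t) := by
  classical
  set K : ℝ := (volume (Metric.ball (0 : EuclideanSpace ℝ (Fin 2)) 1)).toReal with hK
  have hKpos : 0 < K := by
    have h1 : 0 < volume (Metric.ball (0 : EuclideanSpace ℝ (Fin 2)) 1) := Metric.measure_ball_pos _ _ one_pos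
    have h2 : volume (Metric.ball (0 : EuclideanSpace ℝ (Fin 2)) 1) < ⊤ := measure_ball_lt_top
    exact ENNReal.toReal_pos h1.ne' h2.ne
  set a : ℝ := Real.exp (-(2*μ)) / 8 with ha
  set b : ℝ := 1 + 9/8 + 1/(2*μ) with hb
  have hapos : 0 < a := by positivity
  have hbpos : 0 < b := by positivity
  refine ⟨Real.sqrt (2 * K * a), by positivity, Real.sqrt (2 * K * b), by positivity,
    Real.exp 2, by nlinarith [Real.add_one_le_exp (2:ℝ)], fun t htT => ?_⟩
  have ht1 : (1:ℝ) ≤ t := le_trans (by nlinarith [Real.add_one_le_exp (2:ℝ)]) htT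
  have hlog : (0:ℝ) ≤ Real.log t := Real.log_nonneg ht1
  -- polar coordinates
  have hpolar :
      (∫ ξ : EuclideanSpace ℝ (Fin 2),
        (‖ξ‖⁻¹ * Real.sin (‖ξ‖ * t + (1 / 2) * ‖ξ‖ ^ 3 * t) * Real.exp (-μ * ‖ξ‖ ^ 4 * t)) ^ 2)
      = 2 * K * ∫ r in Set.Ioi (0:ℝ),
          r * (r⁻¹ * Real.sin (r * t + (1/2) * r^3 * t) * Real.exp (-μ * r^4 * t))^2 := by
    have := MeasureTheory.integral_fun_norm_addHaar (volume : Measure (EuclideanSpace ℝ (Fin 2)))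
      (fun y : ℝ => (y⁻¹ * Real.sin (y * t + (1/2) * y^3 * t) * Real.exp (-μ * y^4 * t))^2)
    simp only [finrank_euclideanSpace_fin, smul_eq_mul, nsmul_eq_mul, pow_one,
      Nat.cast_ofNat] at this
    rw [this, hK, ← measureReal_def, ]; simp only [Nat.add_one_sub_one, pow_one]; ring
  rw [hpolar]
  set J : ℝ := ∫ r in Set.Ioi (0:ℝ),
      r * (r⁻¹ * Real.sin (r * t + (1/2) * r^3 * t) * Real.exp (-μ * r^4 * t))^2 with hJ
  have hJlo : a * Real.log t ≤ J := aux_lower μ t hμ htT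
  have hJhi : J ≤ b * Real.log t := aux_upper μ t hμ htT
  have hJnonneg : 0 ≤ 2 * K * J := by
    have : (0:ℝ) ≤ a * Real.log t := by positivity
    nlinarith
  have hsqrt : (2 * K * J) ^ ((1:ℝ)/2) = Real.sqrt (2 * K * J) :=
    (Real.sqrt_eq_rpow _).symm
  rw [hsqrt]
  constructor
  · calc Real.sqrt (2*K*a) * Real.sqrt (Real.log t)
        = Real.sqrt (2*K*a*Real.log t) := (Real.sqrt_mul (by positivity) _).symm
      _ ≤ Real.sqrt (2*K*J) := Real.sqrt_le_sqrt (by nlinarith)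
  · calc Real.sqrt (2*K*J)
        ≤ Real.sqrt (2*K*(b*Real.log t)) := Real.sqrt_le_sqrt (by nlinarith)
      _ = Real.sqrt (2*K*b) * Real.sqrt (Real.log t) := by
          rw [← Real.sqrt_mul (by positivity)]; congr 1; ring
end

section
/- Let n ≥ 3, μ > 0, and define Ĝ₁(t,ξ) = |ξ|⁻¹ sin(|ξ|t + (1/2)|ξ|³t) e^{-μ|ξ|⁴t} for ξ ∈ ℝⁿ. Then there exist constants c₁, c₂ > 0 and T₀ ≥ 1 such that for all t ≥ T₀, c₁ t^{-(n-2)/8} ≤ (∫_{ℝⁿ} |Ĝ₁(t,ξ)|² dξ)^{1/2} ≤ c₂ t^{-(n-2)/8}. -/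
open MeasureTheory

open Real intervalIntegral in

lemma G1aux_osc (t a : ℝ) (ht : 1 ≤ t) (ha : 0 < a) :
    |∫ r in a..(2*a), Real.cos (2*t*r + t*r^3)| ≤ 2 / t := by
  have ht0 : (0:ℝ) < t := lt_of_lt_of_le one_pos ht
  set g : ℝ → ℝ := fun r => 2*t*r + t*r^3 with hg
  set d : ℝ → ℝ := fun r => 2*t + 3*t*r^2 with hd
  have hdpos : ∀ r : ℝ, 0 < d r := fun r => by simp only [hd]; nlinarith [sq_nonneg r]
  have hdne : ∀ r : ℝ, d r ≠ 0 := fun r => (hdpos r).ne'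
  set G : ℝ → ℝ := fun r => Real.sin (g r) / d r with hGdef
  have hderiv : ∀ r : ℝ, HasDerivAt G
      (Real.cos (g r) - Real.sin (g r) * (6*t*r) / (d r)^2) r := by
    intro r
    have h1 : HasDerivAt g (d r) r := by
      have : HasDerivAt (fun r : ℝ => 2*t*r + t*r^3) (2*t*1 + t*(3*r^2)) r := by
        exact ((hasDerivAt_id r).const_mul (2*t)).add
          (((hasDerivAt_pow 3 r)).const_mul t |>.congr_deriv (by ring))
      simpa [hd] using this.congr_deriv (by push_cast; ring)
    have h2 : HasDerivAt (fun r => Real.sin (g r)) (Real.cos (g r) * d r) r :=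
      (Real.hasDerivAt_sin (g r)).comp r h1
    have h3 : HasDerivAt d (6*t*r) r := by
      have : HasDerivAt (fun r : ℝ => 2*t + 3*t*r^2) (0 + 3*t*(2*r)) r := by
        exact (hasDerivAt_const r (2*t)).add (((hasDerivAt_pow 2 r)).const_mul (3*t)
          |>.congr_deriv (by push_cast; ring))
      simpa [hd] using this.congr_deriv (by ring)
    have := h2.div h3 (hdne r)
    refine this.congr_deriv ?_
    field_simp [hdne r]
  have hcont_g : Continuous g := by fun_prop
  have hcont_d : Continuous d := by fun_prop
  have hcont_h : Continuous (fun r => Real.sin (g r) * (6*t*r) / (d r)^2) := by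
    apply Continuous.div (by fun_prop) (by fun_prop)
    exact fun r => pow_ne_zero _ (hdne r)
  have hFTC : ∫ r in a..(2*a), (Real.cos (g r) - Real.sin (g r) * (6*t*r) / (d r)^2)
      = G (2*a) - G a := by
    apply intervalIntegral.integral_eq_sub_of_hasDerivAt (fun r _ => hderiv r)
    exact (((Real.continuous_cos.comp hcont_g).sub hcont_h)).intervalIntegrable _ _
  have hsplit : ∫ r in a..(2*a), Real.cos (g r)
      = (G (2*a) - G a) + ∫ r in a..(2*a), Real.sin (g r) * (6*t*r) / (d r)^2 := by
    rw [← hFTC, ← intervalIntegral.integral_add]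
    · simp
    · exact ((Real.continuous_cos.comp hcont_g).sub hcont_h).intervalIntegrable _ _
    · exact hcont_h.intervalIntegrable _ _
  have hGbound : ∀ r : ℝ, |G r| ≤ 1/(2*t) := by
    intro r
    rw [hGdef, abs_div]
    rw [abs_of_pos (hdpos r)]
    apply div_le_div₀ (by positivity) (Real.abs_sin_le_one _) (by positivity)
    simp only [hd]; nlinarith [sq_nonneg r]
  have hIb : |∫ r in a..(2*a), Real.sin (g r) * (6*t*r) / (d r)^2| ≤ 1/t := by
    have := intervalIntegral.norm_integral_le_of_norm_le_const
      (C := 1/(t*a)) (f := fun r => Real.sin (g r) * (6*t*r) / (d r)^2)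
      (a := a) (b := 2*a) ?_
    · rw [Real.norm_eq_abs] at this
      calc _ ≤ 1/(t*a) * |2*a - a| := this
        _ = 1/t := by rw [abs_of_pos (by linarith : (0:ℝ) < 2*a - a)]; field_simp; ring
    · intro x hx
      rw [Set.uIoc_of_le (by linarith)] at hx
      obtain ⟨hx1, hx2⟩ := hx
      have hx0 : 0 < x := lt_trans ha hx1
      rw [Real.norm_eq_abs, abs_div, abs_of_nonneg (sq_nonneg (d x))]
      have h6 : |Real.sin (g x) * (6*t*x)| ≤ 6*t*x := by
        rw [abs_mul]
        calc |Real.sin (g x)| * |6*t*x| ≤ 1 * |6*t*x| :=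
            mul_le_mul_of_nonneg_right (Real.abs_sin_le_one _) (abs_nonneg _)
          _ = 6*t*x := by rw [one_mul, abs_of_pos (by positivity)]
      calc |Real.sin (g x) * (6*t*x)| / (d x)^2 ≤ (6*t*x) / (6*t^2*x^2) := by
            apply div_le_div₀ (by positivity) h6 (by positivity)
            simp only [hd]; nlinarith [sq_nonneg (2*t - 3*t*x^2), sq_nonneg x]
        _ = 1/(t*x) := by field_simp
        _ ≤ 1/(t*a) := by
            apply one_div_le_one_div_of_le (by positivity)
            exact mul_le_mul_of_nonneg_left hx1.le ht0.le
  calc |∫ r in a..(2*a), Real.cos (g r)|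
      ≤ |G (2*a) - G a| + |∫ r in a..(2*a), Real.sin (g r) * (6*t*r) / (d r)^2| := by
        rw [hsplit]; exact abs_add_le _ _
    _ ≤ (|G (2*a)| + |G a|) + 1/t := add_le_add (abs_sub _ _) hIb
    _ ≤ (1/(2*t) + 1/(2*t)) + 1/t := by
        gcongr <;> [exact hGbound _; exact hGbound _]
    _ = 2/t := by field_simp; ring

open Real in

lemma G1aux_sinsq (t : ℝ) (ht : 256 ≤ t) :
    t ^ (-(1:ℝ)/4) / 4 ≤
      ∫ r in Set.Ioc (t ^ (-(1:ℝ)/4)) (2 * t ^ (-(1:ℝ)/4)),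
        (Real.sin (r*t + (1/2)*r^3*t))^2 := by
  have ht0 : (0:ℝ) < t := by linarith
  set a : ℝ := t ^ (-(1:ℝ)/4) with ha_def
  have ha : 0 < a := Real.rpow_pos_of_pos ht0 _
  have hle : a ≤ 2*a := by linarith
  have hta : 4 ≤ t * a := by
    have h1 : t * a = t ^ ((3:ℝ)/4) := by
      rw [ha_def]
      nth_rewrite 1 [← Real.rpow_one t]
      rw [← Real.rpow_add ht0]
      norm_num
    have h64 : (256:ℝ) ^ ((3:ℝ)/4) = 64 := by
      rw [show (256:ℝ) = 2^(8:ℕ) by norm_num, ← Real.rpow_natCast 2 8,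
        ← Real.rpow_mul (by norm_num : (0:ℝ) ≤ 2)]
      push_cast
      rw [show (8:ℝ)*(3/4) = ((6:ℕ):ℝ) by norm_num, Real.rpow_natCast]
      norm_num
    have hmono := Real.rpow_le_rpow (by norm_num : (0:ℝ) ≤ 256) ht (by norm_num : (0:ℝ) ≤ 3/4)
    rw [h64] at hmono
    rw [h1]
    linarith
  have hcos : |∫ r in a..(2*a), Real.cos (2*t*r + t*r^3)| ≤ 2 / t :=
    G1aux_osc t a (by linarith) ha
  have hconta : Continuous fun r : ℝ => Real.cos (2*t*r + t*r^3) := by fun_prop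
  have hset : ∫ r in Set.Ioc a (2*a), (Real.sin (r*t + (1/2)*r^3*t))^2
      = ∫ r in a..(2*a), (Real.sin (r*t + (1/2)*r^3*t))^2 :=
    (intervalIntegral.integral_of_le hle).symm
  rw [hset]
  have hcongr : ∫ r in a..(2*a), (Real.sin (r*t + (1/2)*r^3*t))^2
      = ∫ r in a..(2*a), (1/2 - Real.cos (2*t*r + t*r^3)/2) := by
    apply intervalIntegral.integral_congr
    intro r _
    show Real.sin (r*t + 1/2*r^3*t)^2 = 1/2 - Real.cos (2*t*r + t*r^3)/2
    rw [Real.sin_sq_eq_half_sub, show 2*(r*t + 1/2*r^3*t) = 2*t*r + t*r^3 by ring]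
  rw [hcongr, intervalIntegral.integral_sub (intervalIntegrable_const)
      ((hconta.div_const 2).intervalIntegrable _ _),
    intervalIntegral.integral_const, intervalIntegral.integral_div]
  have h2 : ∫ r in a..(2*a), Real.cos (2*t*r + t*r^3) ≤ 2/t := le_of_abs_le hcos
  have hsmul : (2*a - a) • (1/2 : ℝ) = a/2 := by rw [smul_eq_mul]; ring
  rw [hsmul]
  have h4 : (∫ r in a..(2*a), Real.cos (2*t*r + t*r^3))/2 ≤ 1/t := by
    have h2t : (2:ℝ)/t = 2*(1/t) := by ring
    linarith
  have h5 : a/2 - 1/t ≥ a/4 := by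
    have : 1/t ≤ a/4 := by
      rw [div_le_div_iff₀ ht0 (by norm_num)]
      linarith
    linarith
  linarith

open Real in

theorem G1_optimal_L2_decay_high_dim (n : ℕ) (hn : 3 ≤ n) (μ : ℝ) (hμ : 0 < μ) :
    ∃ c₁ > (0 : ℝ), ∃ c₂ > (0 : ℝ), ∃ T₀ : ℝ, 1 ≤ T₀ ∧ ∀ t : ℝ, T₀ ≤ t →
      c₁ * t ^ (-((n : ℝ) - 2) / 8) ≤
        (∫ ξ : EuclideanSpace ℝ (Fin n),
          (‖ξ‖⁻¹ * Real.sin (‖ξ‖ * t + (1 / 2) * ‖ξ‖ ^ 3 * t) * Real.exp (-μ * ‖ξ‖ ^ 4 * t)) ^ 2) ^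
          ((1 : ℝ) / 2) ∧
      (∫ ξ : EuclideanSpace ℝ (Fin n),
          (‖ξ‖⁻¹ * Real.sin (‖ξ‖ * t + (1 / 2) * ‖ξ‖ ^ 3 * t) * Real.exp (-μ * ‖ξ‖ ^ 4 * t)) ^ 2) ^
          ((1 : ℝ) / 2) ≤ c₂ * t ^ (-((n : ℝ) - 2) / 8) := by
  have hn3 : (3:ℝ) ≤ (n:ℝ) := by exact_mod_cast hn
  haveI : NeZero n := ⟨by omega⟩
  set F : ℝ → ℝ → ℝ := fun t r =>
    (r⁻¹ * Real.sin (r*t + (1/2)*r^3*t) * Real.exp (-μ*r^4*t))^2 with hF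
  set κ : ℝ := (n:ℝ) * (volume (Metric.ball (0:EuclideanSpace ℝ (Fin n)) 1)).toReal with hκdef
  have hκpos : 0 < κ := by
    apply mul_pos (by positivity)
    exact ENNReal.toReal_pos (Metric.measure_ball_pos volume _ one_pos).ne' measure_ball_lt_top.ne
  have hpolar : ∀ t : ℝ, (∫ ξ : EuclideanSpace ℝ (Fin n),
        (‖ξ‖⁻¹ * Real.sin (‖ξ‖ * t + (1 / 2) * ‖ξ‖ ^ 3 * t) * Real.exp (-μ * ‖ξ‖ ^ 4 * t)) ^ 2)
      = κ * ∫ r in Set.Ioi (0:ℝ), r^(n-1) * F t r := by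
    intro t
    have h := MeasureTheory.integral_fun_norm_addHaar
      (volume : Measure (EuclideanSpace ℝ (Fin n))) (F t)
    rw [finrank_euclideanSpace_fin] at h
    simp only [smul_eq_mul, nsmul_eq_mul] at h
    rw [hκdef, mul_assoc]
    exact h
  -- pointwise identity on (0, ∞)
  have hrpow3 : ∀ r : ℝ, r ^ ((n:ℝ)-3) = r ^ (n-3:ℕ) := by
    intro r
    rw [← Real.rpow_natCast r (n-3)]
    congr 1
    rw [Nat.cast_sub hn]
    norm_num
  have hrpow4 : ∀ r : ℝ, r ^ ((4:ℝ)) = r ^ (4:ℕ) := by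
    intro r
    rw [show (4:ℝ) = ((4:ℕ):ℝ) by norm_num, Real.rpow_natCast]
  have hpt : ∀ t r : ℝ, 0 < r → r^(n-1) * F t r
      = r ^ ((n:ℝ)-3) * (Real.sin (r*t + (1/2)*r^3*t))^2
        * Real.exp (-(2*μ*t) * r ^ (4:ℝ)) := by
    intro t r hr
    have hrne : r ≠ 0 := ne_of_gt hr
    have hexp : Real.exp (-μ*r^4*t) * Real.exp (-μ*r^4*t)
        = Real.exp (-(2*μ*t) * r^(4:ℕ)) := by
      rw [← Real.exp_add]; congr 1; ring
    have hpow : r^(n-1) = r^(n-3) * r^2 := by rw [← pow_add]; congr 1; omega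
    have key : r^2 * (r⁻¹)^2 = 1 := by field_simp
    simp only [hF]
    rw [hrpow3, hrpow4]
    calc r^(n-1) * (r⁻¹ * Real.sin (r*t + (1/2)*r^3*t) * Real.exp (-μ*r^4*t))^2
        = (r^(n-3:ℕ) * (Real.sin (r*t + (1/2)*r^3*t))^2
            * (Real.exp (-μ*r^4*t) * Real.exp (-μ*r^4*t))) * (r^2 * (r⁻¹)^2) := by
          rw [hpow]; ring
      _ = r^(n-3:ℕ) * (Real.sin (r*t + (1/2)*r^3*t))^2
            * (Real.exp (-μ*r^4*t) * Real.exp (-μ*r^4*t)) := by rw [key, mul_one]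
      _ = _ := by rw [hexp]
  -- constants
  have hGammaPos : 0 < Real.Gamma (((n:ℝ)-2)/4) :=
    Real.Gamma_pos_of_pos (by linarith)
  set clow : ℝ := κ * (Real.exp (-(32*μ)) / 4) with hclow
  set chigh : ℝ := κ * ((2*μ) ^ (-((n:ℝ)-2)/4) * (1/4) * Real.Gamma (((n:ℝ)-2)/4)) with hchigh
  have hclowpos : 0 < clow := by
    apply mul_pos hκpos; positivity
  have hchighpos : 0 < chigh := by
    apply mul_pos hκpos
    have := Real.rpow_pos_of_pos (show (0:ℝ) < 2*μ by linarith) (-((n:ℝ)-2)/4)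
    positivity
  refine ⟨clow ^ ((1:ℝ)/2), Real.rpow_pos_of_pos hclowpos _,
    chigh ^ ((1:ℝ)/2), Real.rpow_pos_of_pos hchighpos _, 256, by norm_num, ?_⟩
  intro t ht
  have ht0 : (0:ℝ) < t := by linarith
  have hb : (0:ℝ) < 2*μ*t := by positivity
  -- integrability
  have hcomp_int : IntegrableOn
      (fun r : ℝ => r ^ ((n:ℝ)-3) * Real.exp (-(2*μ*t) * r ^ ((4:ℝ)))) (Set.Ioi 0) :=
    integrableOn_rpow_mul_exp_neg_mul_rpow (by linarith) (by norm_num) hb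
  have hmeas : Measurable (fun r : ℝ => r^(n-1) * F t r) := by
    simp only [hF]; fun_prop
  have hFnonneg : ∀ r ∈ Set.Ioi (0:ℝ), 0 ≤ r^(n-1) * F t r := by
    intro r hr
    exact mul_nonneg (pow_nonneg (le_of_lt hr) _) (sq_nonneg _)
  have hptle : ∀ r ∈ Set.Ioi (0:ℝ), r^(n-1) * F t r
      ≤ r ^ ((n:ℝ)-3) * Real.exp (-(2*μ*t) * r ^ ((4:ℝ))) := by
    intro r hr
    rw [hpt t r hr]
    have h1 : r ^ ((n:ℝ)-3) * (Real.sin (r*t + (1/2)*r^3*t))^2 ≤ r ^ ((n:ℝ)-3) * 1 :=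
      mul_le_mul_of_nonneg_left (Real.sin_sq_le_one _) (Real.rpow_nonneg (le_of_lt hr) _)
    calc r ^ ((n:ℝ)-3) * (Real.sin (r*t + (1/2)*r^3*t))^2 * Real.exp (-(2*μ*t) * r ^ ((4:ℝ)))
        ≤ r ^ ((n:ℝ)-3) * 1 * Real.exp (-(2*μ*t) * r ^ ((4:ℝ))) :=
          mul_le_mul_of_nonneg_right h1 (Real.exp_nonneg _)
      _ = r ^ ((n:ℝ)-3) * Real.exp (-(2*μ*t) * r ^ ((4:ℝ))) := by rw [mul_one]
  have hint : IntegrableOn (fun r : ℝ => r^(n-1) * F t r) (Set.Ioi 0) := by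
    refine MeasureTheory.Integrable.mono hcomp_int hmeas.aestronglyMeasurable.restrict ?_
    filter_upwards [ae_restrict_mem measurableSet_Ioi] with r hr
    rw [Real.norm_eq_abs, Real.norm_eq_abs, abs_of_nonneg (hFnonneg r hr),
      abs_of_nonneg (mul_nonneg (Real.rpow_nonneg (le_of_lt hr) _) (Real.exp_nonneg _))]
    exact hptle r hr
  -- upper bound
  have hUval : ∫ r in Set.Ioi (0:ℝ), r ^ ((n:ℝ)-3) * Real.exp (-(2*μ*t) * r ^ ((4:ℝ)))
      = (2*μ*t) ^ (-((n:ℝ)-2)/4) * (1/4) * Real.Gamma (((n:ℝ)-2)/4) := by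
    rw [integral_rpow_mul_exp_neg_mul_rpow (by norm_num) (by linarith) hb,
      show ((n:ℝ)-3+1) = (n:ℝ)-2 by ring]
  have hup : ∫ r in Set.Ioi (0:ℝ), r^(n-1) * F t r
      ≤ (2*μ*t) ^ (-((n:ℝ)-2)/4) * (1/4) * Real.Gamma (((n:ℝ)-2)/4) := by
    rw [← hUval]
    exact setIntegral_mono_on hint hcomp_int measurableSet_Ioi hptle
  -- lower bound
  set a : ℝ := t ^ (-(1:ℝ)/4) with hadef
  have ha : 0 < a := Real.rpow_pos_of_pos ht0 _
  have hsub : Set.Ioc a (2*a) ⊆ Set.Ioi (0:ℝ) := fun x hx => lt_trans ha hx.1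
  have step1 : ∫ r in Set.Ioc a (2*a), r^(n-1) * F t r
      ≤ ∫ r in Set.Ioi (0:ℝ), r^(n-1) * F t r := by
    refine setIntegral_mono_set hint ?_ (HasSubset.Subset.eventuallyLE hsub)
    filter_upwards [ae_restrict_mem measurableSet_Ioi] with r hr using hFnonneg r hr
  have step2 : ∀ r ∈ Set.Ioc a (2*a),
      (t ^ (-((n:ℝ)-3)/4) * Real.exp (-(32*μ))) * (Real.sin (r*t + (1/2)*r^3*t))^2
        ≤ r^(n-1) * F t r := by
    intro r hr
    have hr0 : 0 < r := lt_trans ha hr.1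
    rw [hpt t r hr0]
    have h1 : t ^ (-((n:ℝ)-3)/4) ≤ r ^ ((n:ℝ)-3) := by
      have heq : t ^ (-((n:ℝ)-3)/4) = a ^ ((n:ℝ)-3) := by
        rw [hadef, ← Real.rpow_mul (le_of_lt ht0)]
        congr 1
        ring
      rw [heq]
      exact Real.rpow_le_rpow ha.le hr.1.le (by linarith)
    have h2 : Real.exp (-(32*μ)) ≤ Real.exp (-(2*μ*t) * r ^ ((4:ℝ))) := by
      apply Real.exp_le_exp.mpr
      have hr4 : r ^ ((4:ℝ)) ≤ 16 / t := by
        have hle4 : r ^ ((4:ℝ)) ≤ (2*a) ^ ((4:ℝ)) :=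
          Real.rpow_le_rpow hr0.le hr.2 (by norm_num)
        have ha4 : (2*a) ^ ((4:ℝ)) = 16 / t := by
          rw [Real.mul_rpow (by norm_num) ha.le, hadef, ← Real.rpow_mul (le_of_lt ht0),
            show (-(1:ℝ)/4 * 4) = (-1:ℝ) by ring, Real.rpow_neg_one,
            show ((2:ℝ) ^ ((4:ℝ))) = 16 by
              rw [show (4:ℝ) = ((4:ℕ):ℝ) by norm_num, Real.rpow_natCast]; norm_num]
          field_simp
        linarith
      have hmul : (2*μ*t) * r ^ ((4:ℝ)) ≤ (2*μ*t) * (16/t) :=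
        mul_le_mul_of_nonneg_left hr4 (by positivity)
      have heq : (2*μ*t) * (16/t) = 32*μ := by field_simp; ring
      nlinarith
    calc (t ^ (-((n:ℝ)-3)/4) * Real.exp (-(32*μ))) * (Real.sin (r*t + (1/2)*r^3*t))^2
        ≤ (r ^ ((n:ℝ)-3) * Real.exp (-(2*μ*t) * r ^ ((4:ℝ)))) * (Real.sin (r*t + (1/2)*r^3*t))^2 :=
          mul_le_mul_of_nonneg_right
            (mul_le_mul h1 h2 (Real.exp_nonneg _) (Real.rpow_nonneg hr0.le _)) (sq_nonneg _)
      _ = r ^ ((n:ℝ)-3) * (Real.sin (r*t + (1/2)*r^3*t))^2 * Real.exp (-(2*μ*t) * r ^ ((4:ℝ))) := by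
          ring
  have hlowint : IntegrableOn
      (fun r : ℝ => (t ^ (-((n:ℝ)-3)/4) * Real.exp (-(32*μ))) * (Real.sin (r*t + (1/2)*r^3*t))^2)
      (Set.Ioc a (2*a)) := by
    apply Continuous.integrableOn_Ioc
    fun_prop
  have step3 : ∫ r in Set.Ioc a (2*a),
      (t ^ (-((n:ℝ)-3)/4) * Real.exp (-(32*μ))) * (Real.sin (r*t + (1/2)*r^3*t))^2
      ≤ ∫ r in Set.Ioc a (2*a), r^(n-1) * F t r :=
    setIntegral_mono_on hlowint (hint.mono_set hsub) measurableSet_Ioc step2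
  have step4 : (t ^ (-((n:ℝ)-3)/4) * Real.exp (-(32*μ))) * (a/4)
      ≤ ∫ r in Set.Ioc a (2*a),
        (t ^ (-((n:ℝ)-3)/4) * Real.exp (-(32*μ))) * (Real.sin (r*t + (1/2)*r^3*t))^2 := by
    rw [MeasureTheory.integral_const_mul]
    apply mul_le_mul_of_nonneg_left _ (by positivity)
    have := G1aux_sinsq t ht
    rw [← hadef] at this
    linarith
  have hconstlow : (t ^ (-((n:ℝ)-3)/4) * Real.exp (-(32*μ))) * (a/4)
      = (Real.exp (-(32*μ)) / 4) * t ^ (-((n:ℝ)-2)/4) := by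
    rw [hadef, show (t ^ (-((n:ℝ)-3)/4) * Real.exp (-(32*μ))) * (t ^ (-(1:ℝ)/4)/4)
      = (Real.exp (-(32*μ)) / 4) * (t ^ (-((n:ℝ)-3)/4) * t ^ (-(1:ℝ)/4)) by ring,
      ← Real.rpow_add ht0, show (-((n:ℝ)-3)/4 + -(1:ℝ)/4) = -((n:ℝ)-2)/4 by ring]
  have hlow : (Real.exp (-(32*μ)) / 4) * t ^ (-((n:ℝ)-2)/4)
      ≤ ∫ r in Set.Ioi (0:ℝ), r^(n-1) * F t r := by
    rw [← hconstlow]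
    exact le_trans step4 (le_trans step3 step1)
  -- assemble bounds on the full integral
  have Ilow : clow * t ^ (-((n:ℝ)-2)/4) ≤ (∫ ξ : EuclideanSpace ℝ (Fin n),
        (‖ξ‖⁻¹ * Real.sin (‖ξ‖ * t + (1 / 2) * ‖ξ‖ ^ 3 * t) * Real.exp (-μ * ‖ξ‖ ^ 4 * t)) ^ 2) := by
    rw [hpolar t, hclow]
    calc κ * (Real.exp (-(32*μ)) / 4) * t ^ (-((n:ℝ)-2)/4)
        = κ * ((Real.exp (-(32*μ)) / 4) * t ^ (-((n:ℝ)-2)/4)) := by ring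
      _ ≤ κ * ∫ r in Set.Ioi (0:ℝ), r^(n-1) * F t r :=
          mul_le_mul_of_nonneg_left hlow hκpos.le
  have Ihigh : (∫ ξ : EuclideanSpace ℝ (Fin n),
        (‖ξ‖⁻¹ * Real.sin (‖ξ‖ * t + (1 / 2) * ‖ξ‖ ^ 3 * t) * Real.exp (-μ * ‖ξ‖ ^ 4 * t)) ^ 2)
      ≤ chigh * t ^ (-((n:ℝ)-2)/4) := by
    rw [hpolar t, hchigh]
    have hsplit : (2*μ*t) ^ (-((n:ℝ)-2)/4) = (2*μ) ^ (-((n:ℝ)-2)/4) * t ^ (-((n:ℝ)-2)/4) :=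
      Real.mul_rpow (by positivity) ht0.le
    calc κ * ∫ r in Set.Ioi (0:ℝ), r^(n-1) * F t r
        ≤ κ * ((2*μ*t) ^ (-((n:ℝ)-2)/4) * (1/4) * Real.Gamma (((n:ℝ)-2)/4)) :=
          mul_le_mul_of_nonneg_left hup hκpos.le
      _ = κ * ((2*μ) ^ (-((n:ℝ)-2)/4) * (1/4) * Real.Gamma (((n:ℝ)-2)/4)) * t ^ (-((n:ℝ)-2)/4) := by
          rw [hsplit]; ring
  -- take square roots
  have hExp : (t ^ (-((n:ℝ)-2)/4)) ^ ((1:ℝ)/2) = t ^ (-((n : ℝ) - 2) / 8) := by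
    rw [← Real.rpow_mul ht0.le, show (-((n:ℝ)-2)/4 * ((1:ℝ)/2)) = -((n:ℝ)-2)/8 by ring]
  have h0 : 0 ≤ clow * t ^ (-((n:ℝ)-2)/4) :=
    mul_nonneg hclowpos.le (Real.rpow_nonneg ht0.le _)
  constructor
  · have hmono := Real.rpow_le_rpow h0 Ilow (by norm_num : (0:ℝ) ≤ 1/2)
    rwa [Real.mul_rpow hclowpos.le (Real.rpow_nonneg ht0.le _), hExp] at hmono
  · have hmono := Real.rpow_le_rpow (le_trans h0 Ilow) Ihigh (by norm_num : (0:ℝ) ≤ 1/2)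
    rwa [Real.mul_rpow hchighpos.le (Real.rpow_nonneg ht0.le _), hExp] at hmono
end

section
/- Let μ ∈ (0,1) and, for small r > 0, set λ_R(r) = -μr⁴ and λ_I(r) = √(r² + r⁴ - μ²r⁸). Define K̂₁(t,r) = (sin(λ_I(r)t)/λ_I(r)) e^{λ_R(r)t} and Ĝ₁(t,r) = (1/r) sin(rt + (1/2)r³t) e^{-μr⁴t}. Then there exist C, c, ε₀ > 0 such that |K̂₁(t,r) - Ĝ₁(t,r)| ≤ C e^{-c r⁴ t} for all t ≥ 0 and 0 < r ≤ ε₀. -/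
set_option maxHeartbeats 1000000

lemma sin_diff_le_aux (p q : ℝ) : |Real.sin p - Real.sin q| ≤ |p - q| := by
  rw [Real.sin_sub_sin]
  calc |2 * Real.sin ((p - q) / 2) * Real.cos ((p + q) / 2)|
      = 2 * |Real.sin ((p - q) / 2)| * |Real.cos ((p + q) / 2)| := by
        rw [abs_mul, abs_mul]; norm_num
    _ ≤ 2 * |(p - q) / 2| * 1 := by
        apply mul_le_mul _ (Real.abs_cos_le_one _) (abs_nonneg _) (by positivity)
        exact mul_le_mul_of_nonneg_left Real.abs_sin_le_abs (by norm_num)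
    _ = |p - q| := by rw [abs_div, abs_two]; ring

theorem kernel_K1_G1_error_estimate (μ : ℝ) (hμ : μ ∈ Set.Ioo (0 : ℝ) 1) :
    ∃ C > (0 : ℝ), ∃ c > (0 : ℝ), ∃ ε₀ > (0 : ℝ), ∀ t : ℝ, 0 ≤ t → ∀ r : ℝ, 0 < r → r ≤ ε₀ →
      |Real.sin (Real.sqrt (r ^ 2 + r ^ 4 - μ ^ 2 * r ^ 8) * t) /
            Real.sqrt (r ^ 2 + r ^ 4 - μ ^ 2 * r ^ 8) * Real.exp (-μ * r ^ 4 * t) -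
          (1 / r) * Real.sin (r * t + (1 / 2) * r ^ 3 * t) * Real.exp (-μ * r ^ 4 * t)| ≤
        C * Real.exp (-c * r ^ 4 * t) := by
  obtain ⟨hμ0, hμ1⟩ := hμ
  refine ⟨2 / μ + 1, by positivity, μ / 2, by positivity, 1, one_pos, ?_⟩
  intro t ht r hr hr1
  have hμ2 : μ ^ 2 ≤ 1 := by nlinarith
  have hr2 : r ^ 2 ≤ 1 := by nlinarith
  have hr4 : r ^ 4 ≤ 1 := by nlinarith [sq_nonneg r, sq_nonneg (r ^ 2)]
  have hr84 : r ^ 8 ≤ r ^ 4 := by nlinarith [pow_pos hr 4, pow_nonneg hr.le 4]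
  have hr86 : r ^ 8 ≤ r ^ 6 := by nlinarith [pow_pos hr 6, pow_nonneg hr.le 6]
  have hSr : r ^ 2 ≤ r ^ 2 + r ^ 4 - μ ^ 2 * r ^ 8 := by
    nlinarith [pow_nonneg hr.le 8]
  have hS0 : (0 : ℝ) < r ^ 2 + r ^ 4 - μ ^ 2 * r ^ 8 := lt_of_lt_of_le (pow_pos hr 2) hSr
  set L := Real.sqrt (r ^ 2 + r ^ 4 - μ ^ 2 * r ^ 8) with hLdef
  have hL2 : L ^ 2 = r ^ 2 + r ^ 4 - μ ^ 2 * r ^ 8 := Real.sq_sqrt hS0.le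
  have hrL : r ≤ L := by
    have := Real.sqrt_le_sqrt hSr
    rwa [Real.sqrt_sq hr.le] at this
  have hL0 : 0 < L := lt_of_lt_of_le hr hrL
  have ha0 : (0 : ℝ) < r + r ^ 3 / 2 := by positivity
  have hLa : L ≤ r + r ^ 3 / 2 := by
    have hSa : r ^ 2 + r ^ 4 - μ ^ 2 * r ^ 8 ≤ (r + r ^ 3 / 2) ^ 2 := by
      nlinarith [pow_nonneg hr.le 6, mul_nonneg (sq_nonneg μ) (pow_nonneg hr.le 8)]
    have := Real.sqrt_le_sqrt hSa
    rwa [Real.sqrt_sq ha0.le] at this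
  have key : (r + r ^ 3 / 2 - L) * (r + r ^ 3 / 2 + L) ≤ (5 / 4) * r ^ 6 := by
    nlinarith [hL2, mul_nonneg (sq_nonneg μ) (pow_nonneg hr.le 8), pow_nonneg hr.le 8]
  have haL5 : r + r ^ 3 / 2 - L ≤ r ^ 5 := by
    nlinarith [key, hLa, hrL, hr, pow_pos hr 5, pow_pos hr 6,
      mul_nonneg (sub_nonneg.2 hLa) (sub_nonneg.2 hrL)]
  have key2 : (L - r) * (L + r) ≤ r ^ 4 := by
    nlinarith [hL2, sq_nonneg (μ * r ^ 4)]
  have hLr3 : L - r ≤ r ^ 3 / 2 := by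
    nlinarith [key2, hrL, hr, pow_pos hr 3, mul_nonneg (sub_nonneg.2 hrL) hr.le]
  have hat : r * t + (1 / 2) * r ^ 3 * t = (r + r ^ 3 / 2) * t := by ring
  have hE0 : 0 < Real.exp (-μ * r ^ 4 * t) := Real.exp_pos _
  have hsin : |Real.sin (L * t) - Real.sin ((r + r ^ 3 / 2) * t)| ≤ r ^ 5 * t := by
    have lip := sin_diff_le_aux (L * t) ((r + r ^ 3 / 2) * t)
    have h1 : |L * t - (r + r ^ 3 / 2) * t| = (r + r ^ 3 / 2 - L) * t := by
      rw [abs_sub_comm, show (r + r ^ 3 / 2) * t - L * t = (r + r ^ 3 / 2 - L) * t by ring,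
        abs_of_nonneg (mul_nonneg (by linarith) ht)]
    have h2 : (r + r ^ 3 / 2 - L) * t ≤ r ^ 5 * t := mul_le_mul_of_nonneg_right haL5 ht
    calc |Real.sin (L * t) - Real.sin ((r + r ^ 3 / 2) * t)|
        ≤ |L * t - (r + r ^ 3 / 2) * t| := lip
      _ = (r + r ^ 3 / 2 - L) * t := h1
      _ ≤ r ^ 5 * t := h2
  have hDsplit : Real.sin (L * t) / L - Real.sin ((r + r ^ 3 / 2) * t) / r
      = (Real.sin (L * t) - Real.sin ((r + r ^ 3 / 2) * t)) / L
        + Real.sin ((r + r ^ 3 / 2) * t) * (1 / L - 1 / r) := by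
    field_simp
    ring
  have hterm1 : |(Real.sin (L * t) - Real.sin ((r + r ^ 3 / 2) * t)) / L| ≤ r ^ 4 * t := by
    rw [abs_div, abs_of_pos hL0, div_le_iff₀ hL0]
    calc |Real.sin (L * t) - Real.sin ((r + r ^ 3 / 2) * t)| ≤ r ^ 5 * t := hsin
      _ ≤ r ^ 4 * t * L := by
          nlinarith [hrL, ht, mul_nonneg (pow_nonneg hr.le 4) ht]
  have hterm2 : |Real.sin ((r + r ^ 3 / 2) * t) * (1 / L - 1 / r)| ≤ 1 / 2 := by
    have hinv : |1 / L - 1 / r| ≤ 1 / 2 := by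
      have hle : 1 / L ≤ 1 / r := one_div_le_one_div_of_le hr hrL
      rw [abs_sub_comm, abs_of_nonneg (sub_nonneg.2 hle), div_sub_div _ _ hr.ne' hL0.ne',
        div_le_iff₀ (by positivity)]
      nlinarith [hLr3, hrL, hr, hr1, mul_nonneg hr.le (sub_nonneg.2 hrL)]
    calc |Real.sin ((r + r ^ 3 / 2) * t) * (1 / L - 1 / r)|
        = |Real.sin ((r + r ^ 3 / 2) * t)| * |1 / L - 1 / r| := abs_mul _ _
      _ ≤ 1 * (1 / 2) := mul_le_mul (abs_le.2 ⟨Real.neg_one_le_sin _, Real.sin_le_one _⟩) hinv (abs_nonneg _) zero_le_one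
      _ = 1 / 2 := by norm_num
  have hD : |Real.sin (L * t) / L - Real.sin ((r + r ^ 3 / 2) * t) / r| ≤ r ^ 4 * t + 1 := by
    rw [hDsplit]
    calc |(Real.sin (L * t) - Real.sin ((r + r ^ 3 / 2) * t)) / L
          + Real.sin ((r + r ^ 3 / 2) * t) * (1 / L - 1 / r)|
        ≤ |(Real.sin (L * t) - Real.sin ((r + r ^ 3 / 2) * t)) / L|
          + |Real.sin ((r + r ^ 3 / 2) * t) * (1 / L - 1 / r)| := abs_add_le _ _
      _ ≤ r ^ 4 * t + 1 / 2 := add_le_add hterm1 hterm2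
      _ ≤ r ^ 4 * t + 1 := by linarith
  -- exponential bound
  have hx : 0 ≤ r ^ 4 * t := mul_nonneg (pow_nonneg hr.le 4) ht
  have hexp1 : Real.exp (-μ * r ^ 4 * t)
      = Real.exp (-(μ / 2 * (r ^ 4 * t))) * Real.exp (-(μ / 2 * (r ^ 4 * t))) := by
    rw [← Real.exp_add]
    ring_nf
  have h3 : μ / 2 * (r ^ 4 * t) + 1 ≤ Real.exp (μ / 2 * (r ^ 4 * t)) := Real.add_one_le_exp _
  have hyge : 1 ≤ Real.exp (μ / 2 * (r ^ 4 * t)) := Real.one_le_exp (by positivity)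
  have h5 : μ * (r ^ 4 * t + 1) ≤ (2 + μ) * Real.exp (μ / 2 * (r ^ 4 * t)) := by
    nlinarith [h3, hyge, hμ0, hx]
  have h2 : (r ^ 4 * t + 1) * Real.exp (-(μ / 2 * (r ^ 4 * t))) ≤ 2 / μ + 1 := by
    rw [Real.exp_neg, ← div_eq_mul_inv, div_le_iff₀ (Real.exp_pos _)]
    have heq : (2 / μ + 1) * Real.exp (μ / 2 * (r ^ 4 * t))
        = (2 + μ) * Real.exp (μ / 2 * (r ^ 4 * t)) / μ := by
      field_simp
    rw [heq, le_div_iff₀ hμ0]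
    nlinarith [h5]
  have hfact : Real.sin (L * t) / L * Real.exp (-μ * r ^ 4 * t)
      - 1 / r * Real.sin ((r + r ^ 3 / 2) * t) * Real.exp (-μ * r ^ 4 * t)
      = (Real.sin (L * t) / L - Real.sin ((r + r ^ 3 / 2) * t) / r)
        * Real.exp (-μ * r ^ 4 * t) := by
    ring
  rw [hat, hfact, abs_mul, abs_of_pos hE0]
  have hcexp : -(μ / 2) * r ^ 4 * t = -(μ / 2 * (r ^ 4 * t)) := by ring
  calc |Real.sin (L * t) / L - Real.sin ((r + r ^ 3 / 2) * t) / r|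
        * Real.exp (-μ * r ^ 4 * t)
      ≤ (r ^ 4 * t + 1) * Real.exp (-μ * r ^ 4 * t) :=
        mul_le_mul_of_nonneg_right hD hE0.le
    _ = ((r ^ 4 * t + 1) * Real.exp (-(μ / 2 * (r ^ 4 * t))))
        * Real.exp (-(μ / 2 * (r ^ 4 * t))) := by rw [hexp1]; ring
    _ ≤ (2 / μ + 1) * Real.exp (-(μ / 2 * (r ^ 4 * t))) :=
        mul_le_mul_of_nonneg_right h2 (Real.exp_pos _).le
    _ = (2 / μ + 1) * Real.exp (-(μ / 2) * r ^ 4 * t) := by rw [hcexp]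
end

section
/- Let n ≥ 1, c > 0, s ≥ 0, and g ∈ L¹(ℝⁿ). Define E(t) = (∫_{ℝⁿ} |ξ|^{2s} e^{-2c|ξ|⁴ t} |ĝ(ξ) - P_g|² dξ)^{1/2} where P_g = ∫ g(x) dx. Then t^{(2s+n)/8} E(t) → 0 as t → ∞. -/
open MeasureTheory Complex Filter RealInnerProductSpace

set_option maxHeartbeats 1000000 in
theorem little_o_improvement (n : ℕ) (hn : 1 ≤ n) (c s : ℝ) (hc : 0 < c) (hs : 0 ≤ s)
    (g : EuclideanSpace ℝ (Fin n) → ℂ) (hg : Integrable g) :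
    Tendsto (fun t : ℝ =>
      t ^ ((2 * s + (n : ℝ)) / 8) *
        (∫ ξ : EuclideanSpace ℝ (Fin n),
          ‖ξ‖ ^ (2 * s) * Real.exp (-2 * c * ‖ξ‖ ^ 4 * t) *
            ‖(∫ x, Complex.exp (-Complex.I * (⟪x, ξ⟫ : ℝ)) * g x) - ∫ x, g x‖ ^ 2) ^
          ((1 : ℝ) / 2)) atTop (nhds 0) := by
  set M : ℝ := ∫ x : EuclideanSpace ℝ (Fin n), ‖g x‖ with hMdef
  have hM0 : 0 ≤ M := integral_nonneg fun x => norm_nonneg _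
  set φ : EuclideanSpace ℝ (Fin n) → ℂ :=
    fun ξ => (∫ x, Complex.exp (-Complex.I * (⟪x, ξ⟫ : ℝ)) * g x) - ∫ x, g x with hφdef
  -- norm of the kernel is 1
  have hker : ∀ ξ x : EuclideanSpace ℝ (Fin n),
      ‖Complex.exp (-Complex.I * (⟪x, ξ⟫ : ℝ))‖ = 1 := by
    intro ξ x
    rw [Complex.norm_exp]
    simp
  -- continuity of φ
  have hφcont : Continuous φ := by
    apply Continuous.sub _ continuous_const
    apply continuous_of_dominated (bound := fun x => ‖g x‖)
    · intro ξ
      exact ((Complex.continuous_exp.comp (continuous_const.mul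
        (Complex.continuous_ofReal.comp
          (continuous_id.inner continuous_const)))).aestronglyMeasurable).mul hg.1
    · intro ξ
      filter_upwards with x
      rw [norm_mul, hker, one_mul]
    · exact hg.norm
    · filter_upwards with x
      exact (Complex.continuous_exp.comp (continuous_const.mul
        (Complex.continuous_ofReal.comp
          (continuous_const.inner continuous_id)))).mul continuous_const
  have hφ0 : φ 0 = 0 := by
    simp [hφdef, inner_zero_right]
  have hφbd : ∀ ξ, ‖φ ξ‖ ≤ 2 * M := by
    intro ξ
    have h1 : ‖∫ x, Complex.exp (-Complex.I * (⟪x, ξ⟫ : ℝ)) * g x‖ ≤ M := by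
      refine (norm_integral_le_integral_norm _).trans_eq ?_
      simp only [norm_mul, hker, one_mul, hMdef]
    have h2 : ‖∫ x, g x‖ ≤ M := norm_integral_le_integral_norm _
    calc ‖φ ξ‖ ≤ ‖∫ x, Complex.exp (-Complex.I * (⟪x, ξ⟫ : ℝ)) * g x‖ + ‖∫ x, g x‖ :=
      norm_sub_le _ _
    _ ≤ 2 * M := by linarith
  -- pointwise comparison of the weight with a Gaussian
  have hcomp : ∀ r : ℝ, 0 ≤ r → r ^ (2 * s) * Real.exp (-2 * c * r ^ 4) ≤
      Real.exp ((s + 1) ^ 2 / (8 * c)) * Real.exp (-r ^ 2) := by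
    intro r hr
    have h1 : r ^ (2 * s) ≤ Real.exp (s * r ^ 2) := by
      have hb : r ^ (2 * s) = (r ^ 2) ^ s := by
        rw [← Real.rpow_natCast r 2, ← Real.rpow_mul hr]
        norm_num [mul_comm]
      rw [hb]
      calc (r ^ 2) ^ s ≤ (Real.exp (r ^ 2)) ^ s := by
            apply Real.rpow_le_rpow (sq_nonneg r) _ hs
            linarith [Real.add_one_le_exp (r ^ 2)]
      _ = Real.exp (r ^ 2 * s) := (Real.exp_mul _ _).symm
      _ = Real.exp (s * r ^ 2) := by rw [mul_comm]
    have h2 : Real.exp (s * r ^ 2) * Real.exp (-2 * c * r ^ 4) ≤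
        Real.exp ((s + 1) ^ 2 / (8 * c)) * Real.exp (-r ^ 2) := by
      rw [← Real.exp_add, ← Real.exp_add]
      apply Real.exp_le_exp.2
      have h8 : (s + 1) ^ 2 / (8 * c) * (8 * c) = (s + 1) ^ 2 :=
        div_mul_cancel₀ _ (by positivity)
      nlinarith [sq_nonneg (2 * c * r ^ 2 - (s + 1) / 2), hc, sq_nonneg r]
    calc r ^ (2 * s) * Real.exp (-2 * c * r ^ 4)
        ≤ Real.exp (s * r ^ 2) * Real.exp (-2 * c * r ^ 4) :=
          mul_le_mul_of_nonneg_right h1 (Real.exp_pos _).le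
    _ ≤ _ := h2
  -- the rescaled family
  set F : ℝ → EuclideanSpace ℝ (Fin n) → ℝ := fun t η =>
    ‖η‖ ^ (2 * s) * Real.exp (-2 * c * ‖η‖ ^ 4) * ‖φ (t ^ (-(1/4) : ℝ) • η)‖ ^ 2 with hFdef
  -- Gaussian integrability
  have hgauss : Integrable (fun η : EuclideanSpace ℝ (Fin n) => Real.exp (-‖η‖ ^ 2)) := by
    have h := (GaussianFourier.integrable_cexp_neg_mul_sq_norm_add
      (b := (1 : ℂ)) (by norm_num) 0 (0 : EuclideanSpace ℝ (Fin n))).norm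
    refine h.congr ?_
    filter_upwards with v
    have hz : (-1 * ((‖v‖ : ℝ) : ℂ) ^ 2 +
        0 * ((⟪(0 : EuclideanSpace ℝ (Fin n)), v⟫ : ℝ) : ℂ)) = ((-‖v‖ ^ 2 : ℝ) : ℂ) := by
      push_cast; ring
    rw [hz, Complex.norm_exp_ofReal]
  -- dominated convergence for the rescaled family
  have hmain : Tendsto (fun t => ∫ η : EuclideanSpace ℝ (Fin n), F t η) atTop (nhds 0) := by
    have h0 : Tendsto (fun t => ∫ η : EuclideanSpace ℝ (Fin n), F t η) atTop
        (nhds (∫ _ : EuclideanSpace ℝ (Fin n), (0 : ℝ))) := by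
      apply tendsto_integral_filter_of_dominated_convergence
        (fun η : EuclideanSpace ℝ (Fin n) =>
          Real.exp ((s + 1) ^ 2 / (8 * c)) * (2 * M) ^ 2 * Real.exp (-‖η‖ ^ 2))
      · filter_upwards with t
        simp only [hFdef]
        apply Continuous.aestronglyMeasurable
        exact ((continuous_norm.rpow_const (fun x => Or.inr (by positivity))).mul
          (Real.continuous_exp.comp (by continuity))).mul
          ((hφcont.comp (continuous_const_smul _)).norm.pow 2)
      · filter_upwards with t
        filter_upwards with η
        simp only [hFdef]
        have hb1 : ‖η‖ ^ (2 * s) * Real.exp (-2 * c * ‖η‖ ^ 4) ≤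
            Real.exp ((s + 1) ^ 2 / (8 * c)) * Real.exp (-‖η‖ ^ 2) := hcomp _ (norm_nonneg _)
        have hb2 : ‖φ (t ^ (-(1/4) : ℝ) • η)‖ ^ 2 ≤ (2 * M) ^ 2 :=
          pow_le_pow_left₀ (norm_nonneg _) (hφbd _) 2
        rw [Real.norm_eq_abs, _root_.abs_of_nonneg (by positivity)]
        calc ‖η‖ ^ (2 * s) * Real.exp (-2 * c * ‖η‖ ^ 4) * ‖φ (t ^ (-(1/4) : ℝ) • η)‖ ^ 2
            ≤ (Real.exp ((s + 1) ^ 2 / (8 * c)) * Real.exp (-‖η‖ ^ 2)) * (2 * M) ^ 2 :=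
              mul_le_mul hb1 hb2 (sq_nonneg _) (by positivity)
        _ = _ := by ring
      · exact hgauss.const_mul _
      · filter_upwards with η
        have h1 : Tendsto (fun t : ℝ => t ^ (-(1/4) : ℝ)) atTop (nhds 0) :=
          tendsto_rpow_neg_atTop (by norm_num)
        have h2 : Tendsto (fun t : ℝ => t ^ (-(1/4) : ℝ) • η) atTop
            (nhds (0 : EuclideanSpace ℝ (Fin n))) := by
          have := h1.smul_const η
          simpa using this
        have h3 : Tendsto (fun t : ℝ => ‖φ (t ^ (-(1/4) : ℝ) • η)‖ ^ 2) atTop (nhds 0) := by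
          have := ((hφcont.tendsto 0).comp h2).norm.pow 2
          simpa [hφ0] using this
        have h4 := (tendsto_const_nhds
          (x := ‖η‖ ^ (2 * s) * Real.exp (-2 * c * ‖η‖ ^ 4)) (f := atTop (α := ℝ))).mul h3
        simpa [hFdef, mul_assoc] using h4
    simpa using h0
  have hmain2 : Tendsto (fun t => (∫ η : EuclideanSpace ℝ (Fin n), F t η) ^ ((1 : ℝ) / 2))
      atTop (nhds 0) := by
    have := hmain.rpow_const (p := 1/2) (Or.inr (by norm_num))
    simpa [Real.zero_rpow] using this
  -- the eventual equality via change of variables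
  refine hmain2.congr' ?_
  filter_upwards [eventually_gt_atTop (0 : ℝ)] with t ht
  set R : ℝ := t ^ (-(1/4) : ℝ) with hRdef
  have hRpos : 0 < R := Real.rpow_pos_of_pos ht _
  have hR4 : R ^ 4 * t = 1 := by
    have h : R ^ (4 : ℕ) = t ^ (-(1 : ℝ)) := by
      rw [hRdef, ← Real.rpow_natCast (t ^ (-(1/4) : ℝ)) 4, ← Real.rpow_mul ht.le]
      norm_num
    rw [h, Real.rpow_neg_one]
    exact inv_mul_cancel₀ ht.ne'
  have hR2s : t ^ (s / 2) * R ^ (2 * s) = 1 := by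
    rw [hRdef, ← Real.rpow_mul ht.le, ← Real.rpow_add ht,
      show s / 2 + -(1 / 4) * (2 * s) = 0 by ring, Real.rpow_zero]
  have hRn : ((R : ℝ) ^ Module.finrank ℝ (EuclideanSpace ℝ (Fin n)))⁻¹ = t ^ ((n : ℝ) / 4) := by
    rw [show Module.finrank ℝ (EuclideanSpace ℝ (Fin n)) = n from finrank_euclideanSpace_fin,
      hRdef, ← Real.rpow_natCast (t ^ (-(1/4) : ℝ)) n, ← Real.rpow_mul ht.le,
      ← Real.rpow_neg ht.le]
    congr 1
    ring
  set f : EuclideanSpace ℝ (Fin n) → ℝ := fun ξ =>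
    ‖ξ‖ ^ (2 * s) * Real.exp (-2 * c * ‖ξ‖ ^ 4 * t) * ‖φ ξ‖ ^ 2 with hfdef
  have hfnn : ∀ ξ, 0 ≤ f ξ := fun ξ => by
    simp only [hfdef]; positivity
  have hpt : ∀ η : EuclideanSpace ℝ (Fin n), F t η = t ^ (s / 2) * f (R • η) := by
    intro η
    have hnorm : ‖R • η‖ = R * ‖η‖ := by
      rw [norm_smul, Real.norm_eq_abs, abs_of_pos hRpos]
    have hexp : -2 * c * ‖R • η‖ ^ 4 * t = -2 * c * ‖η‖ ^ 4 := by
      rw [hnorm, mul_pow]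
      rw [show -2 * c * (R ^ 4 * ‖η‖ ^ 4) * t = -2 * c * ‖η‖ ^ 4 * (R ^ 4 * t) by ring,
        hR4, mul_one]
    have hrp : ‖R • η‖ ^ (2 * s) = R ^ (2 * s) * ‖η‖ ^ (2 * s) := by
      rw [hnorm, Real.mul_rpow hRpos.le (norm_nonneg _)]
    calc F t η = (t ^ (s / 2) * R ^ (2 * s)) *
          (‖η‖ ^ (2 * s) * Real.exp (-2 * c * ‖η‖ ^ 4) * ‖φ (R • η)‖ ^ 2) := by
          rw [hR2s, one_mul]
    _ = t ^ (s / 2) * f (R • η) := by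
          simp only [hfdef, hexp, hrp]
          ring
  have hcov : ∫ η : EuclideanSpace ℝ (Fin n), F t η =
      t ^ ((2 * s + (n : ℝ)) / 4) * ∫ ξ : EuclideanSpace ℝ (Fin n), f ξ := by
    calc ∫ η : EuclideanSpace ℝ (Fin n), F t η
        = ∫ η : EuclideanSpace ℝ (Fin n), t ^ (s / 2) * f (R • η) :=
          integral_congr_ae (Filter.Eventually.of_forall hpt)
    _ = t ^ (s / 2) * ∫ η : EuclideanSpace ℝ (Fin n), f (R • η) := integral_const_mul _ _
    _ = t ^ (s / 2) * (((R : ℝ) ^ Module.finrank ℝ (EuclideanSpace ℝ (Fin n)))⁻¹ •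
          ∫ ξ : EuclideanSpace ℝ (Fin n), f ξ) := by
          rw [MeasureTheory.Measure.integral_comp_smul_of_nonneg
            (μ := volume) f R (hR := hRpos.le)]
    _ = t ^ ((2 * s + (n : ℝ)) / 4) * ∫ ξ : EuclideanSpace ℝ (Fin n), f ξ := by
          rw [hRn, smul_eq_mul, ← mul_assoc, ← Real.rpow_add ht]
          congr 2
          ring
  have hInn : 0 ≤ ∫ ξ : EuclideanSpace ℝ (Fin n), f ξ := integral_nonneg hfnn
  calc (∫ η : EuclideanSpace ℝ (Fin n), F t η) ^ ((1 : ℝ) / 2)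
      = (t ^ ((2 * s + (n : ℝ)) / 4) * ∫ ξ : EuclideanSpace ℝ (Fin n), f ξ) ^ ((1 : ℝ) / 2) := by
        rw [hcov]
  _ = (t ^ ((2 * s + (n : ℝ)) / 4)) ^ ((1 : ℝ) / 2) *
        (∫ ξ : EuclideanSpace ℝ (Fin n), f ξ) ^ ((1 : ℝ) / 2) :=
      Real.mul_rpow (Real.rpow_nonneg ht.le _) hInn
  _ = t ^ ((2 * s + (n : ℝ)) / 8) *
        (∫ ξ : EuclideanSpace ℝ (Fin n), f ξ) ^ ((1 : ℝ) / 2) := by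
      rw [← Real.rpow_mul ht.le,
        show (2 * s + (n : ℝ)) / 4 * (1 / 2) = (2 * s + (n : ℝ)) / 8 by ring]
  _ = _ := by simp only [hfdef, hφdef]
end
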